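/- Let G be a split graph on d−1 vertices with vertex partition into a clique C and a stable set S, and let Ḡ be its complement (a split graph with clique S and stable set C). Then s(H(G)) = f_p(G) + f_+(G) + f_-(G) + f_p(Ḡ) − 1, where f_p(G) is the number of primitive faces of H(G), f_+(G) and f_-(G) are the numbers of positive and negative faces of H(G), and f_p(Ḡ) is the number of primitive faces of H(Ḡ); equivalently, the number of nonempty small faces of H(G) equals f_p(Ḡ) − 1. -/

import Mathlib

/-- A finset of vertices is stable (independent) in `G` if no two of its elements are adjacent. -/
def IsStable {n : ℕ} (G : SimpleGraph (Fin n)) (I : Finset (Fin n)) : Prop :=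
  ∀ ⦃a⦄, a ∈ I → ∀ ⦃b⦄, b ∈ I → ¬ G.Adj a b

/-- The point `e_0 + ∑_{i ∈ I} e_i ∈ ℝ^{n+1}`. -/
def hansenVert {n : ℕ} (I : Finset (Fin n)) : Fin (n + 1) → ℝ :=
  fun j => Fin.cases 1 (fun i => if i ∈ I then 1 else 0) j

/-- The Hansen polytope of `G`. -/
def hansenPolytope {n : ℕ} (G : SimpleGraph (Fin n)) : Set (Fin (n + 1) → ℝ) :=
  convexHull ℝ
    {x | ∃ I : Finset (Fin n), IsStable G I ∧ (x = hansenVert I ∨ x = -hansenVert I)}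

/-- The face `[ε, K] = { x ∈ H(G) : ε·(−x_0 + 2·∑_{i ∈ K} x_i) = 1 }` of the Hansen
polytope, for a sign `ε` and a clique `K`. -/
def hFace {n : ℕ} (G : SimpleGraph (Fin n)) (ε : ℝ) (K : Finset (Fin n)) :
    Set (Fin (n + 1) → ℝ) :=
  {x ∈ hansenPolytope G | ε * (-(x 0) + 2 * (∑ i ∈ K, x i.succ)) = 1}

/-- The number of nonempty (exposed) faces of a polytope `P ⊆ ℝ^d`, including `P` itself. -/
noncomputable def numFaces {d : ℕ} (P : Set (Fin d → ℝ)) : ℕ :=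
  {F : Set (Fin d → ℝ) | IsExposed ℝ P F ∧ F.Nonempty}.ncard

/-- `f_p`: the number of primitive faces of `H(G)`, i.e. nonempty exposed faces contained
in no type-(1)-facet `[ε, B]` with `B ⊆ C`. -/
noncomputable def primCount {n : ℕ} (G : SimpleGraph (Fin n)) (C : Finset (Fin n)) : ℕ :=
  {F : Set (Fin (n + 1) → ℝ) | IsExposed ℝ (hansenPolytope G) F ∧ F.Nonempty ∧
    (∀ ε : ℝ, (ε = 1 ∨ ε = -1) → ∀ B ⊆ C, ¬ F ⊆ hFace G ε B)}.ncard

/-- The number of nonempty exposed faces of `H(G)` contained in a type-(1)-facet of sign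
`ε` but in none of sign `−ε` (positive faces for `ε = 1`, negative faces for `ε = −1`). -/
noncomputable def signedCount {n : ℕ} (G : SimpleGraph (Fin n)) (C : Finset (Fin n))
    (ε : ℝ) : ℕ :=
  {F : Set (Fin (n + 1) → ℝ) | IsExposed ℝ (hansenPolytope G) F ∧ F.Nonempty ∧
    (∃ B ⊆ C, F ⊆ hFace G ε B) ∧ (∀ B' ⊆ C, ¬ F ⊆ hFace G (-ε) B')}.ncard

/-- The number of nonempty small faces of `H(G)`: faces contained in type-(1)-facets of
both signs. -/
noncomputable def smallCount {n : ℕ} (G : SimpleGraph (Fin n)) (C : Finset (Fin n)) : ℕ :=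
  {F : Set (Fin (n + 1) → ℝ) | IsExposed ℝ (hansenPolytope G) F ∧ F.Nonempty ∧
    (∃ B ⊆ C, F ⊆ hFace G 1 B) ∧ (∃ B' ⊆ C, F ⊆ hFace G (-1) B')}.ncard

open Finset Set
open scoped Classical

namespace Hansen

variable {n : ℕ}

abbrev E (n : ℕ) := Fin (n + 1) → ℝ

noncomputable def dot (a x : E n) : ℝ := ∑ j, a j * x j

noncomputable def dotL (a : E n) : E n →ₗ[ℝ] ℝ where
  toFun := fun x => dot a x
  map_add' := by intro x y; simp [dot, mul_add, Finset.sum_add_distrib]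
  map_smul' := by
    intro c x; simp only [dot, RingHom.id_apply, smul_eq_mul, Finset.mul_sum]
    apply Finset.sum_congr rfl; intro j _; simp; ring

lemma dotL_apply (a x : E n) : dotL a x = dot a x := rfl

lemma dot_add_right (a x y : E n) : dot a (x + y) = dot a x + dot a y := by
  rw [← dotL_apply, map_add]; rfl

lemma dot_smul_right (a : E n) (c : ℝ) (x : E n) : dot a (c • x) = c * dot a x := by
  rw [← dotL_apply, map_smul]; rfl

lemma dot_neg_right (a x : E n) : dot a (-x) = - dot a x := by
  rw [← dotL_apply, map_neg]; rfl

noncomputable def sgn (b : Bool) : ℝ := if b then 1 else -1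

lemma sgn_cases (b : Bool) : sgn b = 1 ∨ sgn b = -1 := by cases b <;> simp [sgn]

noncomputable def vtx (p : Bool × Finset (Fin n)) : E n := sgn p.1 • hansenVert p.2

noncomputable def Idx (G : SimpleGraph (Fin n)) : Finset (Bool × Finset (Fin n)) :=
  Finset.univ.filter (fun p => IsStable G p.2)

lemma mem_Idx {G : SimpleGraph (Fin n)} {p : Bool × Finset (Fin n)} :
    p ∈ Idx G ↔ IsStable G p.2 := by simp [Idx]

lemma stable_empty (G : SimpleGraph (Fin n)) : IsStable G ∅ := by
  intro a ha; simp at ha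

lemma Idx_nonempty (G : SimpleGraph (Fin n)) : (Idx G).Nonempty :=
  ⟨(true, ∅), mem_Idx.2 (stable_empty G)⟩

lemma hansen_eq (G : SimpleGraph (Fin n)) :
    hansenPolytope G = convexHull ℝ (vtx '' ↑(Idx G)) := by
  unfold hansenPolytope
  congr 1
  ext x
  constructor
  · rintro ⟨I, hI, h | h⟩
    · exact ⟨(true, I), by simpa [mem_Idx] using hI, by simp [vtx, sgn, h]⟩
    · exact ⟨(false, I), by simpa [mem_Idx] using hI, by simp [vtx, sgn, h, neg_one_smul]⟩
  · rintro ⟨⟨b, I⟩, hb, rfl⟩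
    refine ⟨I, by simpa [mem_Idx] using hb, ?_⟩
    cases b
    · right; simp [vtx, sgn, neg_one_smul]
    · left; simp [vtx, sgn]

lemma vtx_mem (G : SimpleGraph (Fin n)) {p} (hp : p ∈ Idx G) : vtx p ∈ hansenPolytope G := by
  rw [hansen_eq]
  exact subset_convexHull ℝ _ ⟨p, hp, rfl⟩

noncomputable def MaxV (G : SimpleGraph (Fin n)) (m : E n) : ℝ :=
  (Idx G).sup' (Idx_nonempty G) (fun p => dot m (vtx p))

lemma le_MaxV_of_idx (G : SimpleGraph (Fin n)) (m : E n) {p} (hp : p ∈ Idx G) :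
    dot m (vtx p) ≤ MaxV G m := by
  unfold MaxV; exact Finset.le_sup' (fun p => dot m (vtx p)) hp

lemma le_MaxV (G : SimpleGraph (Fin n)) (m : E n) {x : E n} (hx : x ∈ hansenPolytope G) :
    dot m x ≤ MaxV G m := by
  rw [hansen_eq] at hx
  have hconv : Convex ℝ {y : E n | dot m y ≤ MaxV G m} := by
    intro u hu v hv a b ha hb hab
    simp only [Set.mem_setOf_eq] at *
    calc dot m (a • u + b • v) = a * dot m u + b * dot m v := by
          rw [dot_add_right, dot_smul_right, dot_smul_right]
      _ ≤ a * MaxV G m + b * MaxV G m := by gcongr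
      _ = MaxV G m := by rw [← add_mul, hab, one_mul]
  refine convexHull_min ?_ hconv hx
  rintro y ⟨p, hp, rfl⟩
  exact le_MaxV_of_idx G m hp

noncomputable def AFin (G : SimpleGraph (Fin n)) (m : E n) : Finset (Bool × Finset (Fin n)) :=
  (Idx G).filter (fun p => dot m (vtx p) = MaxV G m)

lemma AFin_subset (G : SimpleGraph (Fin n)) (m : E n) : AFin G m ⊆ Idx G :=
  Finset.filter_subset _ _

lemma mem_AFin {G : SimpleGraph (Fin n)} {m : E n} {p} :
    p ∈ AFin G m ↔ p ∈ Idx G ∧ dot m (vtx p) = MaxV G m := Finset.mem_filter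

lemma AFin_nonempty (G : SimpleGraph (Fin n)) (m : E n) : (AFin G m).Nonempty := by
  obtain ⟨p, hp, hmax⟩ := Finset.exists_mem_eq_sup' (Idx_nonempty G) (fun p => dot m (vtx p))
  exact ⟨p, mem_AFin.2 ⟨hp, hmax.symm⟩⟩

noncomputable def FF (G : SimpleGraph (Fin n)) (m : E n) : Set (E n) :=
  convexHull ℝ (vtx '' ↑(AFin G m))

lemma FF_subset (G : SimpleGraph (Fin n)) (m : E n) : FF G m ⊆ hansenPolytope G := by
  rw [hansen_eq]
  exact convexHull_mono (Set.image_mono (by exact_mod_cast AFin_subset G m))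

lemma FF_level (G : SimpleGraph (Fin n)) (m : E n) {x} (hx : x ∈ FF G m) :
    dot m x = MaxV G m := by
  have hconv : Convex ℝ {y : E n | dot m y = MaxV G m} := by
    intro u hu v hv a b ha hb hab
    simp only [Set.mem_setOf_eq] at *
    rw [dot_add_right, dot_smul_right, dot_smul_right, hu, hv, ← add_mul, hab, one_mul]
  refine convexHull_min ?_ hconv hx
  rintro y ⟨p, hp, rfl⟩
  exact (mem_AFin.1 (by exact_mod_cast hp)).2

lemma FF_nonempty (G : SimpleGraph (Fin n)) (m : E n) : (FF G m).Nonempty := by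
  obtain ⟨p, hp⟩ := AFin_nonempty G m
  exact ⟨vtx p, subset_convexHull ℝ _ ⟨p, by exact_mod_cast hp, rfl⟩⟩

lemma FF_eq_level (G : SimpleGraph (Fin n)) (m : E n) :
    FF G m = {x ∈ hansenPolytope G | dot m x = MaxV G m} := by
  apply Set.Subset.antisymm
  · intro x hx
    exact ⟨FF_subset G m hx, FF_level G m hx⟩
  · rintro x ⟨hxP, hxv⟩
    rw [hansen_eq] at hxP
    have himg : vtx '' ↑(Idx G) = (((Idx G).image vtx : Finset (E n)) : Set (E n)) := by
      rw [Finset.coe_image]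
    rw [himg, Finset.convexHull_eq] at hxP
    obtain ⟨w, hw0, hw1, hwx⟩ := hxP
    set s : Finset (E n) := (Idx G).image vtx with hs
    have hval : ∀ y ∈ s, dot m y ≤ MaxV G m := by
      intro y hy
      obtain ⟨p, hp, rfl⟩ := Finset.mem_image.1 hy
      exact le_MaxV_of_idx G m hp
    have hxsum : x = ∑ y ∈ s, w y • y := by
      rw [← hwx, Finset.centerMass_eq_of_sum_1 _ _ hw1]
      simp
    have hdot : dot m x = ∑ y ∈ s, w y * dot m y := by
      rw [hxsum, ← dotL_apply, map_sum]
      apply Finset.sum_congr rfl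
      intro y _; rw [map_smul]; rfl
    have hsum0 : ∑ y ∈ s, w y * (MaxV G m - dot m y) = 0 := by
      have : ∑ y ∈ s, w y * (MaxV G m - dot m y)
          = (∑ y ∈ s, w y) * MaxV G m - ∑ y ∈ s, w y * dot m y := by
        rw [Finset.sum_mul]
        rw [← Finset.sum_sub_distrib]
        apply Finset.sum_congr rfl
        intro y _; ring
      rw [this, hw1, one_mul, ← hdot, hxv, sub_self]
    have hterm : ∀ y ∈ s, w y * (MaxV G m - dot m y) = 0 := by
      refine (Finset.sum_eq_zero_iff_of_nonneg ?_).1 hsum0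
      intro y hy
      have h1 := hw0 y hy
      have h2 := hval y hy
      nlinarith
    -- restrict to nonzero weights
    have hxcm : x = (s.filter (fun y => w y ≠ 0)).centerMass w id := by
      rw [Finset.centerMass_filter_ne_zero, hwx]
    have hsub : ∀ y ∈ s.filter (fun y => w y ≠ 0), y ∈ vtx '' ↑(AFin G m) := by
      intro y hy
      obtain ⟨hys, hwy⟩ := Finset.mem_filter.1 hy
      have hy0 := hterm y hys
      have hymax : dot m y = MaxV G m := by
        rcases mul_eq_zero.1 hy0 with h | h
        · exact absurd h hwy
        · linarith [hval y hys]
      obtain ⟨p, hp, rfl⟩ := Finset.mem_image.1 hys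
      exact ⟨p, by exact_mod_cast mem_AFin.2 ⟨hp, hymax⟩, rfl⟩
    rw [hxcm]
    apply Finset.centerMass_mem_convexHull _ (fun y hy => hw0 y (Finset.mem_filter.1 hy).1) _ hsub
    have : ∑ y ∈ s.filter (fun y => w y ≠ 0), w y = 1 := by
      rw [Finset.sum_filter_ne_zero, hw1]
    rw [this]; norm_num

lemma FF_eq_argmax (G : SimpleGraph (Fin n)) (m : E n) :
    FF G m = {x ∈ hansenPolytope G | ∀ y ∈ hansenPolytope G, dot m y ≤ dot m x} := by
  rw [FF_eq_level]
  ext x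
  simp only [Set.mem_setOf_eq]
  constructor
  · rintro ⟨hx, hv⟩
    exact ⟨hx, fun y hy => by rw [hv]; exact le_MaxV G m hy⟩
  · rintro ⟨hx, hv⟩
    refine ⟨hx, le_antisymm (le_MaxV G m hx) ?_⟩
    obtain ⟨p, hp⟩ := AFin_nonempty G m
    have := hv (vtx p) (vtx_mem G (AFin_subset G m hp))
    rw [(mem_AFin.1 hp).2] at this
    exact this

noncomputable def toCLM (m : E n) : E n →L[ℝ] ℝ :=
  LinearMap.toContinuousLinearMap (dotL m)

lemma toCLM_apply (m : E n) (x : E n) : toCLM m x = dot m x := rfl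

lemma clm_coeff (l : E n →L[ℝ] ℝ) :
    ∀ x : E n, l x = dot (fun i => l (fun j => if i = j then 1 else 0)) x := by
  intro x
  conv_lhs => rw [pi_eq_sum_univ x]
  rw [map_sum]
  unfold dot
  apply Finset.sum_congr rfl
  intro i _
  rw [map_smul]
  simp [mul_comm]

lemma exposed_iff (G : SimpleGraph (Fin n)) (F : Set (E n)) :
    (IsExposed ℝ (hansenPolytope G) F ∧ F.Nonempty) ↔ ∃ m, F = FF G m := by
  constructor
  · rintro ⟨he, hne⟩
    obtain ⟨l, hl⟩ := he hne
    refine ⟨fun i => l (fun j => if i = j then 1 else 0), ?_⟩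
    rw [FF_eq_argmax, hl]
    ext x
    simp only [Set.mem_setOf_eq]
    constructor
    · rintro ⟨hx, h⟩
      exact ⟨hx, fun y hy => by rw [← clm_coeff, ← clm_coeff]; exact h y hy⟩
    · rintro ⟨hx, h⟩
      exact ⟨hx, fun y hy => by rw [clm_coeff, clm_coeff]; exact h y hy⟩
  · rintro ⟨m, rfl⟩
    refine ⟨fun _ => ⟨toCLM m, ?_⟩, FF_nonempty G m⟩
    rw [FF_eq_argmax]
    ext x
    simp only [Set.mem_setOf_eq, toCLM_apply]

lemma vtx_inter_FF (G : SimpleGraph (Fin n)) (m : E n) :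
    vtx '' ↑(AFin G m) = (vtx '' ↑(Idx G)) ∩ FF G m := by
  apply Set.Subset.antisymm
  · intro y hy
    obtain ⟨p, hp, rfl⟩ := hy
    exact ⟨⟨p, by exact_mod_cast AFin_subset G m (by exact_mod_cast hp), rfl⟩,
      subset_convexHull ℝ _ ⟨p, hp, rfl⟩⟩
  · rintro y ⟨⟨p, hp, rfl⟩, hyF⟩
    have := FF_level G m hyF
    exact ⟨p, by exact_mod_cast mem_AFin.2 ⟨by exact_mod_cast hp, this⟩, rfl⟩

lemma FF_eq_hull_inter (G : SimpleGraph (Fin n)) (m : E n) :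
    FF G m = convexHull ℝ ((vtx '' ↑(Idx G)) ∩ FF G m) := by
  rw [← vtx_inter_FF]; rfl

lemma faces_finite (G : SimpleGraph (Fin n)) :
    {F : Set (E n) | IsExposed ℝ (hansenPolytope G) F ∧ F.Nonempty}.Finite := by
  set T := {F : Set (E n) | IsExposed ℝ (hansenPolytope G) F ∧ F.Nonempty}
  have hV : (vtx '' ↑(Idx G) : Set (E n)).Finite := (Idx G).finite_toSet.image vtx
  have key : ∀ F ∈ T, F = convexHull ℝ ((vtx '' ↑(Idx G)) ∩ F) := by
    intro F hF
    obtain ⟨m, rfl⟩ := (exposed_iff G F).1 hF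
    exact FF_eq_hull_inter G m
  apply Set.Finite.of_finite_image (f := fun F => (vtx '' ↑(Idx G)) ∩ F)
  · apply Set.Finite.subset (Set.Finite.finite_subsets hV)
    rintro B ⟨F, _, rfl⟩
    exact Set.inter_subset_left
  · intro F1 h1 F2 h2 heq
    rw [key F1 h1, key F2 h2]
    exact congrArg (convexHull ℝ) heq


noncomputable def gvec (e : ℝ) (K : Finset (Fin n)) : E n :=
  fun j => Fin.cases (-e) (fun i => if i ∈ K then 2*e else 0) j

lemma hansenVert_zero (I : Finset (Fin n)) : hansenVert I 0 = 1 := rfl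

lemma hansenVert_succ (I : Finset (Fin n)) (i : Fin n) :
    hansenVert I i.succ = if i ∈ I then 1 else 0 := by
  unfold hansenVert; rw [Fin.cases_succ]

lemma gvec_zero (e : ℝ) (K : Finset (Fin n)) : gvec e K 0 = -e := rfl

lemma gvec_succ (e : ℝ) (K : Finset (Fin n)) (i : Fin n) :
    gvec e K i.succ = if i ∈ K then 2*e else 0 := by
  unfold gvec; rw [Fin.cases_succ]

lemma dot_gvec (e : ℝ) (K : Finset (Fin n)) (x : E n) :
    dot (gvec e K) x = e * (-(x 0) + 2 * ∑ i ∈ K, x i.succ) := by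
  unfold dot
  rw [Fin.sum_univ_succ]
  rw [gvec_zero]
  have : ∀ i : Fin n, gvec e K i.succ * x i.succ = if i ∈ K then 2*e*x i.succ else 0 := by
    intro i; rw [gvec_succ]; split <;> simp
  rw [Finset.sum_congr rfl (fun i _ => this i), Finset.sum_ite_mem, Finset.univ_inter]
  calc (-e) * x 0 + ∑ i ∈ K, 2*e*x i.succ
      = (-e) * x 0 + (2*e) * ∑ i ∈ K, x i.succ := by rw [Finset.mul_sum]
    _ = e * (-(x 0) + 2 * ∑ i ∈ K, x i.succ) := by ring

lemma hFace_eq (G : SimpleGraph (Fin n)) (e : ℝ) (K : Finset (Fin n)) :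
    hFace G e K = {x ∈ hansenPolytope G | dot (gvec e K) x = 1} := by
  ext x; simp only [hFace, Set.mem_setOf_eq, dot_gvec]

lemma sum_vert (K I : Finset (Fin n)) :
    ∑ i ∈ K, hansenVert I i.succ = ((K ∩ I).card : ℝ) := by
  rw [Finset.sum_congr rfl (fun i _ => hansenVert_succ I i), Finset.sum_ite_mem,
    Finset.sum_const, nsmul_eq_mul, mul_one]

lemma dot_gvec_vtx (e : ℝ) (K : Finset (Fin n)) (b : Bool) (I : Finset (Fin n)) :
    dot (gvec e K) (vtx (b, I)) = e * sgn b * (2 * ((K ∩ I).card : ℝ) - 1) := by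
  unfold vtx
  rw [dot_smul_right, dot_gvec]
  simp only [hansenVert_zero, sum_vert]
  ring

lemma stable_subset {G : SimpleGraph (Fin n)} {S I : Finset (Fin n)}
    (hS : IsStable G S) (h : I ⊆ S) : IsStable G I :=
  fun _ ha _ hb => hS (h ha) (h hb)

lemma inter_card_le_one {G : SimpleGraph (Fin n)} {K I : Finset (Fin n)}
    (hK : G.IsClique ↑K) (hI : IsStable G I) : (K ∩ I).card ≤ 1 := by
  rw [Finset.card_le_one]
  intro a ha b hb
  by_contra hne
  have haK := Finset.mem_inter.1 ha
  have hbK := Finset.mem_inter.1 hb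
  exact hI haK.2 hbK.2 (hK haK.1 hbK.1 hne)

section Split

variable {G : SimpleGraph (Fin n)} {C S : Finset (Fin n)}

lemma key_lemma (hdisj : Disjoint C S) (hcover : C ∪ S = Finset.univ)
    (hC : G.IsClique (↑C : Set (Fin n))) (hS : IsStable G S)
    (a0 : ℝ) (a : Fin n → ℝ) (M : ℝ)
    (hub : ∀ K : Finset (Fin n), G.IsClique ↑K → a0 + ∑ i ∈ K, a i ≤ M)
    (hlb : ∀ K : Finset (Fin n), G.IsClique ↑K → -M ≤ a0 + ∑ i ∈ K, a i)
    (hne : a0 ≠ M) :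
    ∃ I : Finset (Fin n), IsStable G I ∧
      (∀ K : Finset (Fin n), G.IsClique ↑K → a0 + ∑ i ∈ K, a i = M → (K ∩ I).Nonempty) ∧
      (∀ K : Finset (Fin n), G.IsClique ↑K → a0 + ∑ i ∈ K, a i = -M → K ∩ I = ∅) := by
  classical
  set f : Finset (Fin n) → ℝ := fun K => a0 + ∑ i ∈ K, a i with hf
  -- fact F1 : max cliques have nonnegative entries
  have F1 : ∀ K : Finset (Fin n), G.IsClique ↑K → f K = M → ∀ x ∈ K, 0 ≤ a x := by
    intro K hK hKM x hx
    have hsub : G.IsClique ↑(K.erase x) :=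
      hK.subset (by exact_mod_cast Finset.erase_subset x K)
    have hs := hub (K.erase x) hsub
    have : ∑ i ∈ K.erase x, a i + a x = ∑ i ∈ K, a i := Finset.sum_erase_add K a hx
    simp only [hf] at hs hKM ⊢
    linarith
  have F2 : ∀ K : Finset (Fin n), G.IsClique ↑K → f K = -M → ∀ x ∈ K, a x ≤ 0 := by
    intro K hK hKM x hx
    have hsub : G.IsClique ↑(K.erase x) :=
      hK.subset (by exact_mod_cast Finset.erase_subset x K)
    have hs := hlb (K.erase x) hsub
    have : ∑ i ∈ K.erase x, a i + a x = ∑ i ∈ K, a i := Finset.sum_erase_add K a hx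
    simp only [hf] at hs hKM ⊢
    linarith
  -- fact F3 : if K ⊆ C is max, vertices of C outside K have nonpositive entries
  have F3 : ∀ K : Finset (Fin n), K ⊆ C → f K = M → ∀ c ∈ C, c ∉ K → a c ≤ 0 := by
    intro K hKC hKM c hc hcK
    have hins : G.IsClique ↑(insert c K) := by
      apply hC.subset
      intro y hy
      simp only [Finset.coe_insert, Set.mem_insert_iff] at hy
      rcases hy with rfl | hy
      · exact hc
      · exact hKC (by exact_mod_cast hy)
    have hs := hub (insert c K) hins
    rw [Finset.sum_insert hcK] at hs
    simp only [hf] at hs hKM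
    linarith
  by_cases hcaseA : ∀ K : Finset (Fin n), G.IsClique ↑K → f K = M → ∃ s ∈ K ∩ S, 0 < a s
  · -- Case A
    refine ⟨S.filter (fun s => 0 < a s), stable_subset hS (Finset.filter_subset _ _), ?_, ?_⟩
    · intro K hK hKM
      obtain ⟨s, hsKS, hsa⟩ := hcaseA K hK hKM
      have hsK := Finset.mem_inter.1 hsKS
      exact ⟨s, Finset.mem_inter.2 ⟨hsK.1, Finset.mem_filter.2 ⟨hsK.2, hsa⟩⟩⟩
    · intro K hK hKneg
      rw [Finset.eq_empty_iff_forall_notMem]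
      intro x hx
      have hxK := Finset.mem_inter.1 hx
      have := F2 K hK hKneg x hxK.1
      have := (Finset.mem_filter.1 hxK.2).2
      linarith
  · -- Case B
    push_neg at hcaseA
    obtain ⟨K₀, hK₀, hK₀M, hK₀S⟩ := hcaseA
    have hK₀nonneg := F1 K₀ hK₀ hK₀M
    have hK₀S0 : ∀ x ∈ K₀, x ∈ S → a x = 0 := by
      intro x hx hxS
      have h1 := hK₀nonneg x hx
      have h2 := hK₀S x (Finset.mem_inter.2 ⟨hx, hxS⟩)
      linarith
    -- pass to the C-only part of K₀
    have hK₀C : f (K₀ ∩ C) = M := by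
      have hsplit : ∑ i ∈ K₀ ∩ C, a i + ∑ i ∈ K₀ \ C, a i = ∑ i ∈ K₀, a i :=
        Finset.sum_inter_add_sum_sdiff K₀ C a
      have hzero : ∑ i ∈ K₀ \ C, a i = 0 := by
        apply Finset.sum_eq_zero
        intro x hx
        have hx' := Finset.mem_sdiff.1 hx
        have hxS : x ∈ S := by
          have := Finset.mem_univ x
          rw [← hcover, Finset.mem_union] at this
          tauto
        exact hK₀S0 x hx'.1 hxS
      simp only [hf] at hK₀M ⊢
      linarith
    by_cases hB1 : ∃ c ∈ C, 0 < a c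
    · -- Case B1
      obtain ⟨cs, hcsC, hcsa⟩ := hB1
      refine ⟨insert cs (S.filter (fun s => 0 < a s ∧ ¬ G.Adj cs s)), ?_, ?_, ?_⟩
      · -- stable
        intro x hx y hy
        rw [Finset.mem_insert] at hx hy
        rcases hx with rfl | hx <;> rcases hy with rfl | hy
        · exact G.irrefl
        · exact (Finset.mem_filter.1 hy).2.2
        · intro h; exact (Finset.mem_filter.1 hx).2.2 h.symm
        · exact hS (Finset.mem_filter.1 hx).1 (Finset.mem_filter.1 hy).1
      · -- hits every maximal clique
        intro K hK hKM
        by_cases hcsK : cs ∈ K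
        · exact ⟨cs, Finset.mem_inter.2 ⟨hcsK, Finset.mem_insert_self _ _⟩⟩
        · by_cases hsk : ∃ s ∈ K ∩ S, 0 < a s
          · obtain ⟨s, hsKS, hsa⟩ := hsk
            have hsK := Finset.mem_inter.1 hsKS
            by_cases hadj : G.Adj cs s
            · -- insert cs K is a clique of value > M : contradiction
              exfalso
              have hins : G.IsClique ↑(insert cs K) := by
                rw [Finset.coe_insert]
                apply hK.insert
                intro b hb hne'
                have hbu := Finset.mem_univ b
                rw [← hcover, Finset.mem_union] at hbu
                rcases hbu with hbC | hbS
                · exact hC hcsC hbC hne'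
                · have : b = s := by
                    have hcard := inter_card_le_one hK hS
                    exact Finset.card_le_one.1 hcard b
                      (Finset.mem_inter.2 ⟨hb, hbS⟩) s hsKS
                  rw [this]; exact hadj
              have hs := hub (insert cs K) hins
              rw [Finset.sum_insert hcsK] at hs
              linarith
            · refine ⟨s, Finset.mem_inter.2 ⟨hsK.1, ?_⟩⟩
              exact Finset.mem_insert.2 (Or.inr (Finset.mem_filter.2 ⟨hsK.2, hsa, hadj⟩))
          · -- K ∩ C is a C-only maximal clique avoiding cs : contradiction with a cs > 0
            exfalso
            push_neg at hsk
            have hKnonneg := F1 K hK hKM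
            have hKC : f (K ∩ C) = M := by
              have hsplit : ∑ i ∈ K ∩ C, a i + ∑ i ∈ K \ C, a i = ∑ i ∈ K, a i :=
                Finset.sum_inter_add_sum_sdiff K C a
              have hzero : ∑ i ∈ K \ C, a i = 0 := by
                apply Finset.sum_eq_zero
                intro x hx
                have hx' := Finset.mem_sdiff.1 hx
                have hxS : x ∈ S := by
                  have := Finset.mem_univ x
                  rw [← hcover, Finset.mem_union] at this
                  tauto
                have h1 := hKnonneg x hx'.1
                have h2 := hsk x (Finset.mem_inter.2 ⟨hx'.1, hxS⟩)
                linarith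
              simp only [hf] at hKM ⊢
              linarith
            have := F3 (K ∩ C) Finset.inter_subset_right hKC cs hcsC
              (fun h => hcsK (Finset.mem_inter.1 h).1)
            linarith
      · -- avoids nonpositive cliques
        intro K hK hKneg
        rw [Finset.eq_empty_iff_forall_notMem]
        intro x hx
        have hxK := Finset.mem_inter.1 hx
        have hins := Finset.mem_insert.1 hxK.2
        have hxneg := F2 K hK hKneg x hxK.1
        rcases hins with rfl | hxf
        · linarith
        · have := (Finset.mem_filter.1 hxf).2.1
          linarith
    · -- Case B2 : contradiction with hne
      exfalso
      push_neg at hB1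
      have : ∀ x ∈ K₀ ∩ C, a x = 0 := by
        intro x hx
        have hx' := Finset.mem_inter.1 hx
        have h1 := F1 K₀ hK₀ hK₀M x hx'.1
        have h2 := hB1 x hx'.2
        linarith
      have : f (K₀ ∩ C) = a0 := by
        simp only [hf]
        rw [Finset.sum_eq_zero this]
        ring
      rw [hK₀C] at this
      exact hne this.symm

end Split


noncomputable def val (K : Finset (Fin n)) (x : E n) : ℝ := dot (gvec 1 K) x

lemma val_eq (K : Finset (Fin n)) (x : E n) :
    val K x = -(x 0) + 2 * ∑ i ∈ K, x i.succ := by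
  rw [val, dot_gvec]; ring

lemma dot_gvec_val (e : ℝ) (K : Finset (Fin n)) (x : E n) :
    dot (gvec e K) x = e * val K x := by
  rw [dot_gvec, val_eq]

lemma val_add (K : Finset (Fin n)) (x y : E n) : val K (x + y) = val K x + val K y :=
  dot_add_right _ _ _

lemma val_smul (K : Finset (Fin n)) (c : ℝ) (x : E n) : val K (c • x) = c * val K x :=
  dot_smul_right _ _ _

lemma val_neg (K : Finset (Fin n)) (x : E n) : val K (-x) = - val K x :=
  dot_neg_right _ _

lemma sum_ind (K I : Finset (Fin n)) :
    ∑ i ∈ K, (if i ∈ I then (1:ℝ) else 0) = ((K ∩ I).card : ℝ) := by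
  rw [Finset.sum_ite_mem, Finset.sum_const, nsmul_eq_mul, mul_one]

lemma val_vtx (K : Finset (Fin n)) (b : Bool) (I : Finset (Fin n)) :
    val K (vtx (b, I)) = sgn b * (2 * ((K ∩ I).card : ℝ) - 1) := by
  rw [val, dot_gvec_vtx]; ring

def Qset (G : SimpleGraph (Fin n)) : Set (E n) :=
  {x | ∀ K : Finset (Fin n), G.IsClique ↑K → |val K x| ≤ 1}

lemma clique_empty (G : SimpleGraph (Fin n)) : G.IsClique (↑(∅ : Finset (Fin n))) := by
  simp [SimpleGraph.isClique_iff]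

lemma clique_singleton (G : SimpleGraph (Fin n)) (i : Fin n) :
    G.IsClique (↑({i} : Finset (Fin n))) := by
  simp [SimpleGraph.isClique_iff]

lemma card01 {G : SimpleGraph (Fin n)} {K I : Finset (Fin n)}
    (hK : G.IsClique ↑K) (hI : IsStable G I) :
    ((K ∩ I).card : ℝ) = 0 ∨ ((K ∩ I).card : ℝ) = 1 := by
  have := inter_card_le_one hK hI
  rcases Nat.le_one_iff_eq_zero_or_eq_one.1 this with h | h
  · left; rw [h]; norm_num
  · right; rw [h]; norm_num

lemma vtx_mem_Q {G : SimpleGraph (Fin n)} {p} (hp : p ∈ Idx G) : vtx p ∈ Qset G := by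
  intro K hK
  obtain ⟨b, I⟩ := p
  rw [val_vtx]
  have hI : IsStable G I := mem_Idx.1 hp
  rcases card01 hK hI with h | h <;> rcases sgn_cases b with hb | hb <;>
    rw [h, hb] <;> norm_num

lemma Q_convex (G : SimpleGraph (Fin n)) : Convex ℝ (Qset G) := by
  intro u hu v hv a b ha hb hab
  intro K hK
  have h1 := hu K hK
  have h2 := hv K hK
  rw [val_add, val_smul, val_smul]
  calc |a * val K u + b * val K v| ≤ |a * val K u| + |b * val K v| := abs_add_le _ _
    _ = a * |val K u| + b * |val K v| := by
        rw [abs_mul, abs_mul, abs_of_nonneg ha, abs_of_nonneg hb]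
    _ ≤ a * 1 + b * 1 := by gcongr
    _ = 1 := by rw [mul_one, mul_one, hab]

lemma P_subset_Q (G : SimpleGraph (Fin n)) : hansenPolytope G ⊆ Qset G := by
  rw [hansen_eq]
  refine convexHull_min ?_ (Q_convex G)
  rintro y ⟨p, hp, rfl⟩
  exact vtx_mem_Q (by exact_mod_cast hp)

lemma val_continuous (K : Finset (Fin n)) : Continuous (fun x : E n => val K x) := by
  simp only [val, dot]
  exact continuous_finset_sum _ (fun j _ => (continuous_const.mul (continuous_apply j)))

lemma Q_closed (G : SimpleGraph (Fin n)) : IsClosed (Qset G) := by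
  have : Qset G = ⋂ (K : Finset (Fin n)) (_ : G.IsClique ↑K), {x : E n | |val K x| ≤ 1} := by
    ext x; simp [Qset, Set.mem_iInter]
  rw [this]
  refine isClosed_iInter (fun K => isClosed_iInter (fun hK => ?_))
  have : Continuous (fun x : E n => |val K x|) := (val_continuous K).abs
  exact isClosed_le this continuous_const

lemma Q_compact (G : SimpleGraph (Fin n)) : IsCompact (Qset G) := by
  refine IsCompact.of_isClosed_subset (isCompact_univ_pi
    (fun _ : Fin (n+1) => isCompact_Icc (a := (-1:ℝ)) (b := 1))) (Q_closed G) ?_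
  intro x hx
  have h0 : |x 0| ≤ 1 := by
    have := hx ∅ (clique_empty G)
    rw [val_eq] at this
    simpa using this
  rw [Set.mem_univ_pi]
  intro j
  refine Fin.cases ?_ ?_ j
  · rw [Set.mem_Icc]; exact abs_le.1 h0
  · intro i
    have := hx {i} (clique_singleton G i)
    rw [val_eq] at this
    simp only [Finset.sum_singleton] at this
    rw [Set.mem_Icc]
    have h0' := abs_le.1 h0
    have h1' := abs_le.1 this
    constructor <;> nlinarith [h0'.1, h0'.2, h1'.1, h1'.2]

section SplitQ

variable {G : SimpleGraph (Fin n)} {C S : Finset (Fin n)}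

set_option maxHeartbeats 1000000 in
lemma pert (hx : x ∈ Qset G) (d : E n)
    (ht : ∀ K : Finset (Fin n), G.IsClique ↑K → (val K x = 1 ∨ val K x = -1) → val K d = 0)
    (hex : x ∈ extremePoints ℝ (Qset G)) : d = 0 := by
  classical
  set T : Finset (Finset (Fin n)) :=
    Finset.univ.filter (fun K => G.IsClique ↑K ∧ ¬(val K x = 1 ∨ val K x = -1)) with hT
  set ε : ℝ :=
    (insert (1:ℝ) (T.image (fun K => (1 - |val K x|) / (|val K d| + 1)))).min'
      (Finset.insert_nonempty _ _) with he
  have hltT : ∀ K ∈ T, |val K x| < 1 := by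
    intro K hK
    have hm := Finset.mem_filter.1 hK
    have hle := hx K hm.2.1
    have hne : |val K x| ≠ 1 := by
      intro h
      rcases (abs_eq (by norm_num : (0:ℝ) ≤ 1)).1 h with h' | h'
      · exact hm.2.2 (Or.inl h')
      · exact hm.2.2 (Or.inr h')
    exact lt_of_le_of_ne hle hne
  have hslack : ∀ K ∈ T, 0 < (1 - |val K x|) / (|val K d| + 1) := by
    intro K hK
    have hlt := hltT K hK
    have : 0 < |val K d| + 1 := by positivity
    have h1 : 0 < 1 - |val K x| := by linarith
    positivity
  have hε : 0 < ε := by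
    have := Finset.min'_mem (insert (1:ℝ) (T.image (fun K => (1 - |val K x|) / (|val K d| + 1))))
      (Finset.insert_nonempty _ _)
    rw [← he] at this
    rcases Finset.mem_insert.1 this with h | h
    · rw [h]; norm_num
    · obtain ⟨K, hK, hKe⟩ := Finset.mem_image.1 h
      rw [← hKe]; exact hslack K hK
  have hmem : ∀ s : ℝ, s = 1 ∨ s = -1 → x + s • (ε • d) ∈ Qset G := by
    intro s hs K hK
    rw [val_add, val_smul, val_smul]
    by_cases htight : val K x = 1 ∨ val K x = -1
    · rw [ht K hK htight]
      rw [mul_zero, mul_zero, add_zero]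
      exact hx K hK
    · have hKT : K ∈ T := Finset.mem_filter.2 ⟨Finset.mem_univ K, hK, htight⟩
      have hεle : ε ≤ (1 - |val K x|) / (|val K d| + 1) := by
        apply Finset.min'_le
        exact Finset.mem_insert.2 (Or.inr (Finset.mem_image.2 ⟨K, hKT, rfl⟩))
      have habs : |s * (ε * val K d)| ≤ ε * |val K d| := by
        rcases hs with rfl | rfl <;>
          simp [abs_mul, abs_of_nonneg hε.le]
      have hlt := hltT K hKT
      have hv1 : (0:ℝ) < |val K d| + 1 := by positivity
      have hεd : ε * |val K d| < 1 - |val K x| := by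
        have h1 : ε * (|val K d| + 1) ≤ 1 - |val K x| := by
          rw [← le_div_iff₀ hv1]
          exact hεle
        nlinarith
      have : |val K x + s * (ε * val K d)| < 1 := by
        calc |val K x + s * (ε * val K d)| ≤ |val K x| + |s * (ε * val K d)| := abs_add_le _ _
          _ ≤ |val K x| + ε * |val K d| := by linarith
          _ < 1 := by linarith
      exact this.le
  have h1 := hmem 1 (Or.inl rfl)
  have h2 := hmem (-1) (Or.inr rfl)
  rw [one_smul] at h1
  have hseg : x ∈ openSegment ℝ (x + (-1:ℝ) • (ε • d)) (x + ε • d) := by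
    refine ⟨1/2, 1/2, by norm_num, by norm_num, by norm_num, ?_⟩
    module
  obtain ⟨ha, hb⟩ := (mem_extremePoints.1 hex).2 _ h2 _ h1 hseg
  have : ε • d = 0 := by
    have := congrArg (fun y => y - x) hb
    simpa using this
  have := smul_eq_zero.1 this
  rcases this with h | h
  · exact absurd h (ne_of_gt hε)
  · exact h

end SplitQ

lemma neg_mem_Q {G : SimpleGraph (Fin n)} {x : E n} (hx : x ∈ Qset G) : -x ∈ Qset G := by
  intro K hK; rw [val_neg, abs_neg]; exact hx K hK

lemma neg_extreme {G : SimpleGraph (Fin n)} {x : E n}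
    (hx : x ∈ extremePoints ℝ (Qset G)) : -x ∈ extremePoints ℝ (Qset G) := by
  obtain ⟨hxQ, hmin⟩ := mem_extremePoints.1 hx
  refine mem_extremePoints.2 ⟨neg_mem_Q hxQ, ?_⟩
  intro x1 h1 x2 h2 hseg
  obtain ⟨a, b, ha, hb, hab, hsum⟩ := hseg
  have hseg' : x ∈ openSegment ℝ (-x1) (-x2) :=
    ⟨a, b, ha, hb, hab, by rw [smul_neg, smul_neg, ← neg_add, hsum, neg_neg]⟩
  have h := hmin _ (neg_mem_Q h1) _ (neg_mem_Q h2) hseg'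
  constructor
  · rw [← h.1, neg_neg]
  · rw [← h.2, neg_neg]

section SplitMain

variable {G : SimpleGraph (Fin n)} {C S : Finset (Fin n)}

lemma extreme_top (hdisj : Disjoint C S) (hcover : C ∪ S = Finset.univ)
    (hC : G.IsClique (↑C : Set (Fin n))) (hS : IsStable G S)
    {x : E n} (hex : x ∈ extremePoints ℝ (Qset G)) (h0 : x 0 = 1) :
    ∃ I, IsStable G I ∧ x = hansenVert I := by
  classical
  have hxQ : x ∈ Qset G := (mem_extremePoints.1 hex).1
  have hsum : ∀ K : Finset (Fin n), G.IsClique ↑K →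
      0 ≤ ∑ i ∈ K, x i.succ ∧ ∑ i ∈ K, x i.succ ≤ 1 := by
    intro K hK
    have := abs_le.1 (hxQ K hK)
    rw [val_eq, h0] at this
    constructor <;> linarith [this.1, this.2]
  obtain ⟨I, hI, hhit, havoid⟩ := key_lemma hdisj hcover hC hS (-(1/2))
    (fun i => x i.succ) (1/2)
    (fun K hK => by
      have := (hsum K hK).2
      show -(1/2) + ∑ i ∈ K, x i.succ ≤ 1/2
      linarith)
    (fun K hK => by
      have := (hsum K hK).1
      show -(1/2) ≤ -(1/2) + ∑ i ∈ K, x i.succ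
      linarith)
    (by norm_num)
  set d : E n := fun j => Fin.cases 0 (fun i => (if i ∈ I then (1:ℝ) else 0) - x i.succ) j
    with hd
  have hd0 : d 0 = 0 := rfl
  have hds : ∀ i : Fin n, d i.succ = (if i ∈ I then (1:ℝ) else 0) - x i.succ := by
    intro i; rw [hd]; exact Fin.cases_succ _
  have hdval : ∀ K : Finset (Fin n), G.IsClique ↑K →
      (val K x = 1 ∨ val K x = -1) → val K d = 0 := by
    intro K hK ht
    have hsd : ∑ i ∈ K, d i.succ = ((K ∩ I).card : ℝ) - ∑ i ∈ K, x i.succ := by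
      rw [Finset.sum_congr rfl (fun i _ => hds i), Finset.sum_sub_distrib, sum_ind]
    rcases ht with h | h
    · have hsig : ∑ i ∈ K, x i.succ = 1 := by rw [val_eq, h0] at h; linarith
      have hne : (K ∩ I).Nonempty := hhit K hK
        (by show -(1/2) + ∑ i ∈ K, x i.succ = 1/2; linarith)
      have hle := inter_card_le_one hK hI
      have hcard : (K ∩ I).card = 1 := le_antisymm hle (Finset.card_pos.2 hne)
      rw [val_eq, hd0, hsd, hcard, hsig]
      norm_num
    · have hsig : ∑ i ∈ K, x i.succ = 0 := by rw [val_eq, h0] at h; linarith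
      have hemp : K ∩ I = ∅ := havoid K hK
        (by show -(1/2) + ∑ i ∈ K, x i.succ = -(1/2); linarith)
      rw [val_eq, hd0, hsd, hemp, hsig]
      norm_num
  have hdz := pert hxQ d hdval hex
  refine ⟨I, hI, ?_⟩
  funext j
  refine Fin.cases ?_ ?_ j
  · rw [h0]; rfl
  · intro i
    have := congrFun hdz i.succ
    rw [hds] at this
    rw [hansenVert_succ]
    simp only [Pi.zero_apply] at this
    linarith [this]

lemma extreme_mid (hdisj : Disjoint C S) (hcover : C ∪ S = Finset.univ)
    (hC : G.IsClique (↑C : Set (Fin n))) (hS : IsStable G S)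
    {x : E n} (hex : x ∈ extremePoints ℝ (Qset G))
    (habs : |x 0| < 1) : False := by
  classical
  have hxQ : x ∈ Qset G := (mem_extremePoints.1 hex).1
  have hrange : ∀ K : Finset (Fin n), G.IsClique ↑K →
      -1 ≤ val K x ∧ val K x ≤ 1 := fun K hK => abs_le.1 (hxQ K hK)
  have habs' := abs_lt.1 habs
  obtain ⟨I, hI, hhitI, havoidI⟩ := key_lemma hdisj hcover hC hS (-(x 0)/2)
    (fun i => x i.succ) (1/2)
    (fun K hK => by
      have := (hrange K hK).2; rw [val_eq] at this
      show -(x 0)/2 + ∑ i ∈ K, x i.succ ≤ 1/2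
      linarith)
    (fun K hK => by
      have := (hrange K hK).1; rw [val_eq] at this
      show -(1/2) ≤ -(x 0)/2 + ∑ i ∈ K, x i.succ
      linarith)
    (by
      intro h
      have h2 : x 0 = -1 := by linarith
      linarith [habs'.1])
  obtain ⟨J, hJ, hhitJ, havoidJ⟩ := key_lemma hdisj hcover hC hS (x 0/2)
    (fun i => -(x i.succ)) (1/2)
    (fun K hK => by
      have := (hrange K hK).1; rw [val_eq] at this
      show x 0/2 + ∑ i ∈ K, -(x i.succ) ≤ 1/2
      rw [Finset.sum_neg_distrib]; linarith)
    (fun K hK => by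
      have := (hrange K hK).2; rw [val_eq] at this
      show -(1/2) ≤ x 0/2 + ∑ i ∈ K, -(x i.succ)
      rw [Finset.sum_neg_distrib]; linarith)
    (by
      intro h
      have h2 : x 0 = 1 := by linarith
      linarith [habs'.2])
  set d : E n := fun j => Fin.cases 2
    (fun i => (if i ∈ I then (1:ℝ) else 0) + (if i ∈ J then (1:ℝ) else 0)) j with hd
  have hd0 : d 0 = 2 := rfl
  have hds : ∀ i : Fin n,
      d i.succ = (if i ∈ I then (1:ℝ) else 0) + (if i ∈ J then (1:ℝ) else 0) := by
    intro i; rw [hd]; exact Fin.cases_succ _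
  have hdval : ∀ K : Finset (Fin n), G.IsClique ↑K →
      (val K x = 1 ∨ val K x = -1) → val K d = 0 := by
    intro K hK ht
    have hsd : ∑ i ∈ K, d i.succ = ((K ∩ I).card : ℝ) + ((K ∩ J).card : ℝ) := by
      rw [Finset.sum_congr rfl (fun i _ => hds i), Finset.sum_add_distrib, sum_ind, sum_ind]
    rcases ht with h | h
    · have hsig : -(x 0)/2 + ∑ i ∈ K, x i.succ = 1/2 := by
        rw [val_eq] at h; linarith
      have hne : (K ∩ I).Nonempty := hhitI K hK
        (by show -(x 0)/2 + ∑ i ∈ K, x i.succ = 1/2; linarith)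
      have hcardI : (K ∩ I).card = 1 :=
        le_antisymm (inter_card_le_one hK hI) (Finset.card_pos.2 hne)
      have hemp : K ∩ J = ∅ := havoidJ K hK (by
        rw [val_eq] at h
        show x 0/2 + ∑ i ∈ K, -(x i.succ) = -(1/2)
        rw [Finset.sum_neg_distrib]; linarith)
      rw [val_eq, hd0, hsd, hcardI, hemp]
      norm_num
    · have hsig : x 0/2 + ∑ i ∈ K, -(x i.succ) = 1/2 := by
        rw [val_eq] at h
        simp only [Finset.sum_neg_distrib]; linarith
      have hne : (K ∩ J).Nonempty := hhitJ K hK hsig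
      have hcardJ : (K ∩ J).card = 1 :=
        le_antisymm (inter_card_le_one hK hJ) (Finset.card_pos.2 hne)
      have hemp : K ∩ I = ∅ := havoidI K hK
        (by rw [val_eq] at h; show -(x 0)/2 + ∑ i ∈ K, x i.succ = -(1/2); linarith)
      rw [val_eq, hd0, hsd, hcardJ, hemp]
      norm_num
  have hdz := pert hxQ d hdval hex
  have := congrFun hdz 0
  rw [hd0] at this
  simp at this

lemma extreme_vtx (hdisj : Disjoint C S) (hcover : C ∪ S = Finset.univ)
    (hC : G.IsClique (↑C : Set (Fin n))) (hS : IsStable G S)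
    {x : E n} (hex : x ∈ extremePoints ℝ (Qset G)) :
    x ∈ vtx '' (↑(Idx G) : Set (Bool × Finset (Fin n))) := by
  have hxQ : x ∈ Qset G := (mem_extremePoints.1 hex).1
  have h0 : |x 0| ≤ 1 := by
    have := hxQ ∅ (clique_empty G)
    rw [val_eq] at this
    simpa using this
  by_cases h1 : x 0 = 1
  · obtain ⟨I, hI, hxe⟩ := extreme_top hdisj hcover hC hS hex h1
    exact ⟨(true, I), by exact_mod_cast mem_Idx.2 hI, by rw [hxe]; simp [vtx, sgn]⟩
  · by_cases h2 : x 0 = -1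
    · have hneg := neg_extreme hex
      have h0' : (-x) 0 = 1 := by simp [h2]
      obtain ⟨I, hI, hxe⟩ := extreme_top hdisj hcover hC hS hneg h0'
      refine ⟨(false, I), by exact_mod_cast mem_Idx.2 hI, ?_⟩
      have : x = -hansenVert I := by
        rw [← hxe]; simp
      rw [this]; simp [vtx, sgn, neg_one_smul]
    · exfalso
      apply extreme_mid hdisj hcover hC hS hex
      rcases abs_le.1 h0 with ⟨hl, hr⟩
      rw [abs_lt]
      constructor
      · cases' lt_or_eq_of_le hl with h h
        · linarith
        · exact absurd h.symm h2
      · cases' lt_or_eq_of_le hr with h h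
        · exact h
        · exact absurd h h1

lemma P_closed (G : SimpleGraph (Fin n)) : IsClosed (hansenPolytope G) := by
  rw [hansen_eq]
  exact (Set.Finite.isCompact_convexHull (𝕜 := ℝ) ((Idx G).finite_toSet.image vtx)).isClosed

lemma Q_eq_P (hdisj : Disjoint C S) (hcover : C ∪ S = Finset.univ)
    (hC : G.IsClique (↑C : Set (Fin n))) (hS : IsStable G S) :
    Qset G = hansenPolytope G := by
  apply Set.Subset.antisymm _ (P_subset_Q G)
  have hKM := closure_convexHull_extremePoints (Q_compact G) (Q_convex G)
  calc Qset G = closure (convexHull ℝ (extremePoints ℝ (Qset G))) := hKM.symm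
    _ ⊆ closure (convexHull ℝ (vtx '' (↑(Idx G) : Set (Bool × Finset (Fin n))))) := by
        apply closure_mono
        apply convexHull_mono
        intro x hx
        exact extreme_vtx hdisj hcover hC hS hx
    _ = hansenPolytope G := by
        rw [← hansen_eq]
        exact (P_closed G).closure_eq

end SplitMain

noncomputable def qvec (y : E n) : E n :=
  fun j => Fin.cases (-(y 0)) (fun i => 2 * y i.succ) j

lemma qvec_zero (y : E n) : qvec y 0 = -(y 0) := rfl

lemma qvec_succ (y : E n) (i : Fin n) : qvec y i.succ = 2 * y i.succ := by
  unfold qvec; rw [Fin.cases_succ]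

noncomputable def pairB (y x : E n) : ℝ := dot (qvec y) x

lemma pairB_expand (y x : E n) :
    pairB y x = -(y 0) * x 0 + ∑ i : Fin n, 2 * y i.succ * x i.succ := by
  unfold pairB dot
  rw [Fin.sum_univ_succ, qvec_zero]
  have hq : ∀ i : Fin n, qvec y i.succ * x i.succ = 2 * y i.succ * x i.succ :=
    fun i => by rw [qvec_succ]
  rw [Finset.sum_congr rfl (fun i _ => hq i)]

lemma pairB_comm (y x : E n) : pairB y x = pairB x y := by
  rw [pairB_expand, pairB_expand]
  congr 1
  · ring
  · exact Finset.sum_congr rfl (fun i _ => by ring)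

lemma qvec_vtx (b : Bool) (K : Finset (Fin n)) : qvec (vtx (b, K)) = gvec (sgn b) K := by
  funext j
  refine Fin.cases ?_ ?_ j
  · rw [qvec_zero, gvec_zero]
    show -(sgn b * hansenVert K 0) = -(sgn b)
    rw [hansenVert_zero, mul_one]
  · intro i
    rw [qvec_succ, gvec_succ]
    show 2 * (sgn b * hansenVert K i.succ) = _
    rw [hansenVert_succ]
    split <;> ring

lemma pairB_vtx_left (b : Bool) (K : Finset (Fin n)) (x : E n) :
    pairB (vtx (b, K)) x = sgn b * val K x := by
  rw [pairB, qvec_vtx, dot_gvec_val]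

lemma pairB_vtx_vtx (b c : Bool) (K I : Finset (Fin n)) :
    pairB (vtx (b, K)) (vtx (c, I)) = sgn b * (sgn c * (2 * ((K ∩ I).card : ℝ) - 1)) := by
  rw [pairB_vtx_left, val_vtx]

lemma stable_compl_iff (G : SimpleGraph (Fin n)) (K : Finset (Fin n)) :
    IsStable Gᶜ K ↔ G.IsClique ↑K := by
  constructor
  · intro h a ha b hb hne
    by_contra hadj
    exact h ha hb ((G.compl_adj a b).2 ⟨hne, hadj⟩)
  · intro h a ha b hb hadj
    rw [G.compl_adj] at hadj
    exact hadj.2 (h ha hb hadj.1)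

lemma pairB_vtx_le_one {G : SimpleGraph (Fin n)} {q p : Bool × Finset (Fin n)}
    (hq : q ∈ Idx Gᶜ) (hp : p ∈ Idx G) : pairB (vtx q) (vtx p) ≤ 1 := by
  obtain ⟨b, K⟩ := q
  obtain ⟨c, I⟩ := p
  rw [pairB_vtx_vtx]
  have hK : G.IsClique ↑K := (stable_compl_iff G K).1 (mem_Idx.1 hq)
  have hI : IsStable G I := mem_Idx.1 hp
  rcases card01 hK hI with h | h <;> rcases sgn_cases b with hb | hb <;>
    rcases sgn_cases c with hc | hc <;> rw [h, hb, hc] <;> norm_num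

lemma pairB_convex_le (y : E n) (r : ℝ) : Convex ℝ {x : E n | pairB y x ≤ r} := by
  intro u hu v hv a b ha hb hab
  simp only [Set.mem_setOf_eq] at *
  unfold pairB at *
  rw [dot_add_right, dot_smul_right, dot_smul_right]
  calc a * dot (qvec y) u + b * dot (qvec y) v ≤ a * r + b * r := by gcongr
    _ = r := by rw [← add_mul, hab, one_mul]

lemma pairB_convex_eq (y : E n) (r : ℝ) : Convex ℝ {x : E n | pairB y x = r} := by
  intro u hu v hv a b ha hb hab
  simp only [Set.mem_setOf_eq] at *
  unfold pairB at *
  rw [dot_add_right, dot_smul_right, dot_smul_right, hu, hv, ← add_mul, hab, one_mul]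

lemma pairB_le_one {G : SimpleGraph (Fin n)} {y x : E n}
    (hy : y ∈ hansenPolytope Gᶜ) (hx : x ∈ hansenPolytope G) : pairB y x ≤ 1 := by
  have step1 : ∀ q ∈ Idx Gᶜ, pairB (vtx q) x ≤ 1 := by
    intro q hq
    rw [hansen_eq] at hx
    refine convexHull_min ?_ (pairB_convex_le (vtx q) 1) hx
    rintro z ⟨p, hp, rfl⟩
    exact pairB_vtx_le_one hq (by exact_mod_cast hp)
  rw [hansen_eq] at hy
  have hconv : Convex ℝ {z : E n | pairB z x ≤ 1} := by
    have heq : {z : E n | pairB z x ≤ 1} = {z : E n | pairB x z ≤ 1} := by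
      ext z; simp only [Set.mem_setOf_eq]; rw [pairB_comm]
    rw [heq]
    exact pairB_convex_le x 1
  refine convexHull_min ?_ hconv hy
  rintro z ⟨q, hq, rfl⟩
  exact step1 q (by exact_mod_cast hq)

lemma dot_comm (a x : E n) : dot a x = dot x a := by
  unfold dot; exact Finset.sum_congr rfl (fun j _ => mul_comm _ _)

lemma vtx_neg (b : Bool) (I : Finset (Fin n)) : vtx (!b, I) = -(vtx (b, I)) := by
  cases b <;> · funext j; simp [vtx, sgn]

lemma qvec_neg (y : E n) : qvec (-y) = -(qvec y) := by
  funext j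
  refine Fin.cases ?_ ?_ j
  · show -((-y) 0) = -(qvec y 0)
    rw [qvec_zero]
    simp
  · intro i
    show qvec (-y) i.succ = -(qvec y i.succ)
    rw [qvec_succ, qvec_succ]
    simp

section Polar

variable {G : SimpleGraph (Fin n)} {C S : Finset (Fin n)}

lemma polar_mem (hdisj : Disjoint C S) (hcover : C ∪ S = Finset.univ)
    (hC : G.IsClique (↑C : Set (Fin n))) (hS : IsStable G S)
    {m : E n} (hm : ∀ p ∈ Idx G, dot m (vtx p) ≤ 1) :
    m ∈ convexHull ℝ ((fun q => qvec (vtx q)) '' ↑(Idx Gᶜ)) := by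
  classical
  by_contra hno
  set D : Set (E n) := (fun q => qvec (vtx q)) '' ↑(Idx Gᶜ) with hD
  have hDfin : D.Finite := (Idx Gᶜ).finite_toSet.image _
  have hconv : Convex ℝ (convexHull ℝ D) := convex_convexHull ℝ D
  have hclosed : IsClosed (convexHull ℝ D) :=
    (Set.Finite.isCompact_convexHull (𝕜 := ℝ) hDfin).isClosed
  obtain ⟨f, u, hfu, hum⟩ := geometric_hahn_banach_closed_point hconv hclosed hno
  set c : E n := fun i => f (fun j => if i = j then 1 else 0) with hc
  have hfc : ∀ z : E n, f z = dot c z := fun z => clm_coeff f z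
  have hqp : (true, (∅ : Finset (Fin n))) ∈ Idx Gᶜ := mem_Idx.2 (stable_empty _)
  have hDmem : ∀ q ∈ Idx Gᶜ, qvec (vtx q) ∈ convexHull ℝ D := by
    intro q hq
    exact subset_convexHull ℝ D ⟨q, by exact_mod_cast hq, rfl⟩
  have hvals : ∀ q ∈ Idx Gᶜ, dot c (qvec (vtx q)) < u := by
    intro q hq
    rw [← hfc]
    exact hfu _ (hDmem q hq)
  have hu0 : 0 < u := by
    have hg1 := hDmem _ hqp
    have hg2 := hDmem _ (mem_Idx.2 (stable_empty Gᶜ) :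
      ((false, (∅ : Finset (Fin n))) ∈ Idx Gᶜ))
    have hneg : qvec (vtx (false, (∅ : Finset (Fin n)))) =
        -(qvec (vtx (true, (∅ : Finset (Fin n))))) := by
      have hft : (false : Bool) = !true := rfl
      rw [hft, vtx_neg, qvec_neg]
    have h0 : (0 : E n) ∈ convexHull ℝ D := by
      have hcomb := hconv hg1 hg2 (by norm_num : (0:ℝ) ≤ 1/2) (by norm_num : (0:ℝ) ≤ 1/2)
        (by norm_num)
      rw [hneg] at hcomb
      simpa using hcomb
    have := hfu 0 h0
    simpa using this
  set T : ℝ := (Idx Gᶜ).sup' ⟨_, hqp⟩ (fun q => dot c (qvec (vtx q))) with hT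
  have hTle : ∀ q ∈ Idx Gᶜ, dot c (qvec (vtx q)) ≤ T := by
    intro q hq
    rw [hT]
    exact Finset.le_sup' (fun q => dot c (qvec (vtx q))) hq
  have hvalK : ∀ K : Finset (Fin n), G.IsClique ↑K → val K c ≤ T ∧ -(val K c) ≤ T := by
    intro K hK
    have hmem1 : (true, K) ∈ Idx Gᶜ := mem_Idx.2 ((stable_compl_iff G K).2 hK)
    have hmem2 : (false, K) ∈ Idx Gᶜ := mem_Idx.2 ((stable_compl_iff G K).2 hK)
    constructor
    · have h := hTle _ hmem1
      rwa [qvec_vtx, dot_comm, dot_gvec_val, show sgn true = 1 from rfl, one_mul] at h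
    · have h := hTle _ hmem2
      rw [qvec_vtx, dot_comm, dot_gvec_val, show sgn false = -1 from rfl] at h
      linarith
  have hT0 : 0 ≤ T := by
    have h := hvalK ∅ (clique_empty G)
    linarith [h.1, h.2]
  have hPm : ∀ z ∈ hansenPolytope G, dot m z ≤ 1 := by
    intro z hz
    calc dot m z ≤ MaxV G m := le_MaxV G m hz
      _ ≤ 1 := Finset.sup'_le _ _ (fun p hp => hm p hp)
  have hTltu : T < u := by
    obtain ⟨q, hq, hTq⟩ := Finset.exists_mem_eq_sup' ⟨_, hqp⟩
      (fun q => dot c (qvec (vtx q)))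
    rw [hT, hTq]
    exact hvals q hq
  have hcm : u < dot m c := by rw [dot_comm, ← hfc]; exact hum
  rcases lt_or_eq_of_le hT0 with hTpos | hTzero
  · have hzQ : T⁻¹ • c ∈ Qset G := by
      intro K hK
      have h := hvalK K hK
      have habs : |val K c| ≤ T := abs_le.2 ⟨by linarith [h.2], h.1⟩
      rw [val_smul, abs_mul, abs_of_nonneg (inv_nonneg.2 hT0)]
      calc T⁻¹ * |val K c| ≤ T⁻¹ * T :=
            mul_le_mul_of_nonneg_left habs (inv_nonneg.2 hT0)
        _ = 1 := inv_mul_cancel₀ (ne_of_gt hTpos)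
    rw [Q_eq_P hdisj hcover hC hS] at hzQ
    have hle := hPm _ hzQ
    rw [dot_smul_right] at hle
    have hgt : 1 < T⁻¹ * dot m c := by
      have h1 : T⁻¹ * T < T⁻¹ * dot m c :=
        mul_lt_mul_of_pos_left (lt_trans hTltu hcm) (inv_pos.2 hTpos)
      rwa [inv_mul_cancel₀ (ne_of_gt hTpos)] at h1
    linarith
  · -- T = 0
    have hval0 : ∀ K : Finset (Fin n), G.IsClique ↑K → val K c = 0 := by
      intro K hK
      have h := hvalK K hK
      rw [← hTzero] at h
      linarith [h.1, h.2]
    have hdm : 0 < dot m c := lt_trans hu0 hcm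
    set lam : ℝ := 2 / dot m c with hlam
    have hlampos : 0 < lam := by positivity
    have hzQ : lam • c ∈ Qset G := by
      intro K hK
      rw [val_smul, hval0 K hK, mul_zero]
      norm_num
    rw [Q_eq_P hdisj hcover hC hS] at hzQ
    have hle := hPm _ hzQ
    rw [dot_smul_right] at hle
    rw [hlam] at hle
    rw [div_mul_eq_mul_div, mul_div_assoc] at hle
    rw [div_self (ne_of_gt hdm)] at hle
    linarith

end Polar

noncomputable def dualFace (G' : SimpleGraph (Fin n)) (F : Set (E n)) : Set (E n) :=
  {y ∈ hansenPolytope G' | ∀ x ∈ F, pairB y x = 1}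

lemma dualFace_subset (G' : SimpleGraph (Fin n)) (F : Set (E n)) :
    dualFace G' F ⊆ hansenPolytope G' := fun _ h => h.1

lemma FF_neq_P_normalize {G : SimpleGraph (Fin n)} (m : E n)
    (hne : FF G m ≠ hansenPolytope G) :
    ∃ m', FF G m' = FF G m ∧ MaxV G m' = 1 := by
  classical
  set M := MaxV G m with hMdef
  have hM0 : 0 ≤ M := by
    have h1 := le_MaxV_of_idx G m (mem_Idx.2 (stable_empty G) :
      ((true, (∅ : Finset (Fin n))) ∈ Idx G))
    have h2 := le_MaxV_of_idx G m (mem_Idx.2 (stable_empty G) :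
      ((false, (∅ : Finset (Fin n))) ∈ Idx G))
    have hv : vtx ((false, (∅ : Finset (Fin n)))) = -(vtx ((true, (∅ : Finset (Fin n))))) :=
      vtx_neg true ∅
    rw [hv, dot_neg_right] at h2
    rw [← hMdef] at h1 h2
    linarith
  have hMpos : 0 < M := by
    rcases lt_or_eq_of_le hM0 with h | h
    · exact h
    · exfalso
      apply hne
      have hAll : AFin G m = Idx G := by
        apply Finset.Subset.antisymm (AFin_subset G m)
        intro p hp
        refine mem_AFin.2 ⟨hp, ?_⟩
        have h1 := le_MaxV_of_idx G m hp
        have hst : IsStable G p.2 := mem_Idx.1 hp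
        have hp' : ((!p.1, p.2) : Bool × Finset (Fin n)) ∈ Idx G := mem_Idx.2 hst
        have h2 := le_MaxV_of_idx G m hp'
        have hv : vtx (!p.1, p.2) = -(vtx (p.1, p.2)) := vtx_neg p.1 p.2
        rw [hv, dot_neg_right] at h2
        rw [← hMdef] at h1 h2 ⊢
        have hpp : vtx (p.1, p.2) = vtx p := by rfl
        rw [hpp] at h2
        linarith
      rw [FF, hAll, ← hansen_eq]
  set m' := M⁻¹ • m with hm'
  have hd : ∀ z : E n, dot m' z = M⁻¹ * dot m z := by
    intro z; rw [hm', dot_comm, dot_smul_right, dot_comm]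
  obtain ⟨pmax, hpmax, hMeq⟩ := Finset.exists_mem_eq_sup' (Idx_nonempty G)
    (fun p => dot m (vtx p))
  have hMV : MaxV G m' = 1 := by
    apply le_antisymm
    · apply Finset.sup'_le
      intro p hp
      rw [hd]
      calc M⁻¹ * dot m (vtx p) ≤ M⁻¹ * M :=
            mul_le_mul_of_nonneg_left (le_MaxV_of_idx G m hp) (inv_nonneg.2 hM0)
        _ = 1 := inv_mul_cancel₀ (ne_of_gt hMpos)
    · have hMeq' : MaxV G m = dot m (vtx pmax) := hMeq
      have h1 : dot m' (vtx pmax) = 1 := by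
        rw [hd]
        have hdm : dot m (vtx pmax) = M := by rw [hMdef, hMeq']
        rw [hdm, inv_mul_cancel₀ (ne_of_gt hMpos)]
      calc (1:ℝ) = dot m' (vtx pmax) := h1.symm
        _ ≤ MaxV G m' := le_MaxV_of_idx G m' hpmax
  have hAeq : AFin G m' = AFin G m := by
    ext q
    rw [mem_AFin, mem_AFin, hMV, ← hMdef]
    constructor
    · rintro ⟨hq, hval⟩
      refine ⟨hq, ?_⟩
      rw [hd] at hval
      have h2 := congrArg (fun t => M * t) hval
      try simp only at h2
      rwa [← mul_assoc, mul_inv_cancel₀ (ne_of_gt hMpos), one_mul, mul_one] at h2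
    · rintro ⟨hq, hval⟩
      refine ⟨hq, ?_⟩
      rw [hd, hval, inv_mul_cancel₀ (ne_of_gt hMpos)]
  exact ⟨m', by rw [FF, FF, hAeq], hMV⟩

section FaceDecomp

variable {G : SimpleGraph (Fin n)} {C S : Finset (Fin n)}

lemma face_decomp (hdisj : Disjoint C S) (hcover : C ∪ S = Finset.univ)
    (hC : G.IsClique (↑C : Set (Fin n))) (hS : IsStable G S)
    {m : E n} (hM : MaxV G m = 1) :
    (∃ q ∈ Idx Gᶜ, ∀ x ∈ FF G m, pairB (vtx q) x = 1) ∧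
    (∀ x ∈ hansenPolytope G,
       (∀ q ∈ Idx Gᶜ, (∀ x' ∈ FF G m, pairB (vtx q) x' = 1) → pairB (vtx q) x = 1) →
       x ∈ FF G m) := by
  classical
  have hm : ∀ p ∈ Idx G, dot m (vtx p) ≤ 1 := by
    intro p hp
    rw [← hM]
    exact le_MaxV_of_idx G m hp
  have hmem := polar_mem hdisj hcover hC hS hm
  set Dfin : Finset (E n) := (Idx Gᶜ).image (fun q => qvec (vtx q)) with hDfin
  have himg : (fun q => qvec (vtx q)) '' ↑(Idx Gᶜ) = (↑Dfin : Set (E n)) := by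
    rw [hDfin, Finset.coe_image]
  rw [himg, Finset.convexHull_eq] at hmem
  obtain ⟨w, hw0, hw1, hwm⟩ := hmem
  have hmsum : m = ∑ g ∈ Dfin, w g • g := by
    rw [← hwm, Finset.centerMass_eq_of_sum_1 _ _ hw1]
    simp
  have hdotx : ∀ x : E n, dot m x = ∑ g ∈ Dfin, w g * dot g x := by
    intro x
    rw [dot_comm, hmsum, ← dotL_apply, map_sum]
    apply Finset.sum_congr rfl
    intro g _
    rw [map_smul]
    show w g * dot x g = _
    rw [dot_comm]
  have hgle : ∀ g ∈ Dfin, ∀ x ∈ hansenPolytope G, dot g x ≤ 1 := by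
    intro g hg x hx
    obtain ⟨q, hq, rfl⟩ := Finset.mem_image.1 hg
    have hvq : vtx q ∈ hansenPolytope Gᶜ := vtx_mem Gᶜ hq
    exact pairB_le_one hvq hx
  have hcontact : ∀ g ∈ Dfin, w g ≠ 0 → ∀ x ∈ FF G m, dot g x = 1 := by
    intro g hg hwg x hx
    have hdx : dot m x = 1 := by
      rw [FF_level G m hx, hM]
    have hsum0 : ∑ g' ∈ Dfin, w g' * (1 - dot g' x) = 0 := by
      have hexp : ∑ g' ∈ Dfin, w g' * (1 - dot g' x)
          = (∑ g' ∈ Dfin, w g') - ∑ g' ∈ Dfin, w g' * dot g' x := by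
        rw [← Finset.sum_sub_distrib]
        apply Finset.sum_congr rfl
        intro g' _
        ring
      rw [hexp, hw1, ← hdotx, hdx, sub_self]
    have hterm := (Finset.sum_eq_zero_iff_of_nonneg ?_).1 hsum0 g hg
    · rcases mul_eq_zero.1 hterm with h | h
      · exact absurd h hwg
      · linarith
    · intro g' hg'
      have h1 := hw0 g' hg'
      have h2 := hgle g' hg' x (FF_subset G m hx)
      nlinarith
  constructor
  · have hex : ∃ g ∈ Dfin, w g ≠ 0 := by
      by_contra hno
      push_neg at hno
      rw [Finset.sum_eq_zero hno] at hw1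
      norm_num at hw1
    obtain ⟨g, hg, hwg⟩ := hex
    obtain ⟨q, hq, hgq⟩ := Finset.mem_image.1 hg
    refine ⟨q, hq, fun x hx => ?_⟩
    have := hcontact g hg hwg x hx
    rw [← hgq] at this
    exact this
  · intro x hx hq1
    have hdx : dot m x = 1 := by
      rw [hdotx]
      have : ∀ g ∈ Dfin, w g * dot g x = w g := by
        intro g hg
        by_cases hwg : w g = 0
        · rw [hwg]; ring
        · obtain ⟨q, hq, hgq⟩ := Finset.mem_image.1 hg
          have hprem : ∀ x' ∈ FF G m, pairB (vtx q) x' = 1 := by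
            intro x' hx'
            have := hcontact g hg hwg x' hx'
            rw [← hgq] at this
            exact this
          have := hq1 q hq hprem
          rw [← hgq] at hg ⊢
          show w (qvec (vtx q)) * dot (qvec (vtx q)) x = w (qvec (vtx q))
          rw [show dot (qvec (vtx q)) x = pairB (vtx q) x from rfl, this, mul_one]
      rw [Finset.sum_congr rfl this, hw1]
    rw [FF_eq_level]
    exact ⟨hx, by rw [hdx, hM]⟩

end FaceDecomp

lemma dot_qvec_pair (x y : E n) : dot (qvec x) y = pairB y x := by
  rw [show dot (qvec x) y = pairB x y from rfl, pairB_comm]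

section DualGood

variable {G : SimpleGraph (Fin n)}

lemma dualFace_good (m : E n)
    (hwit : (dualFace Gᶜ (FF G m)).Nonempty) :
    IsExposed ℝ (hansenPolytope Gᶜ) (dualFace Gᶜ (FF G m)) ∧
      ∃ m', dualFace Gᶜ (FF G m) = FF Gᶜ m' := by
  classical
  set A := AFin G m with hA
  have hAne : A.Nonempty := AFin_nonempty G m
  set N : ℝ := (A.card : ℝ) with hN
  have hNpos : 0 < N := by
    rw [hN]
    exact_mod_cast Finset.card_pos.2 hAne
  set x0 : E n := N⁻¹ • ∑ p ∈ A, vtx p with hx0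
  have hx0F : x0 ∈ FF G m := by
    have hcm : A.centerMass (fun _ => (1:ℝ)) vtx = x0 := by
      rw [Finset.centerMass, hx0]
      congr 1
      · rw [Finset.sum_const, nsmul_eq_mul, mul_one, hN]
      · apply Finset.sum_congr rfl
        intro p _
        rw [one_smul]
    rw [← hcm]
    apply Finset.centerMass_mem_convexHull
    · intro p _; norm_num
    · rw [Finset.sum_const, nsmul_eq_mul, mul_one]
      exact_mod_cast Finset.card_pos.2 hAne
    · intro p hp
      exact ⟨p, by exact_mod_cast hp, rfl⟩
  have hx0P : x0 ∈ hansenPolytope G := FF_subset G m hx0F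
  have hpairx0 : ∀ y : E n, pairB y x0 = N⁻¹ * ∑ p ∈ A, pairB y (vtx p) := by
    intro y
    rw [show pairB y x0 = dot (qvec y) x0 from rfl, hx0, dot_smul_right]
    congr 1
    rw [← dotL_apply, map_sum]
    rfl
  have hvtxF : ∀ p ∈ A, vtx p ∈ FF G m := by
    intro p hp
    exact subset_convexHull ℝ _ ⟨p, by exact_mod_cast hp, rfl⟩
  have hchar : dualFace Gᶜ (FF G m) = {y ∈ hansenPolytope Gᶜ | pairB y x0 = 1} := by
    apply Set.Subset.antisymm
    · rintro y ⟨hyP, hy1⟩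
      refine ⟨hyP, ?_⟩
      rw [hpairx0]
      have hones : ∀ p ∈ A, pairB y (vtx p) = 1 := fun p hp => hy1 _ (hvtxF p hp)
      rw [Finset.sum_congr rfl hones, Finset.sum_const, nsmul_eq_mul, mul_one, ← hN,
        inv_mul_cancel₀ (ne_of_gt hNpos)]
    · rintro y ⟨hyP, hy1⟩
      refine ⟨hyP, ?_⟩
      have hple : ∀ p ∈ A, pairB y (vtx p) ≤ 1 := by
        intro p hp
        exact pairB_le_one hyP (FF_subset G m (hvtxF p hp))
      have hsum : ∑ p ∈ A, (1 - pairB y (vtx p)) = 0 := by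
        rw [Finset.sum_sub_distrib, Finset.sum_const, nsmul_eq_mul, mul_one]
        rw [hpairx0] at hy1
        have hs : ∑ p ∈ A, pairB y (vtx p) = N := by
          have h2 := congrArg (fun t => N * t) hy1
          try simp only at h2
          rwa [← mul_assoc, mul_inv_cancel₀ (ne_of_gt hNpos), one_mul, mul_one] at h2
        rw [hs, ← hN, sub_self]
      have hall : ∀ p ∈ A, 1 - pairB y (vtx p) = 0 := by
        refine (Finset.sum_eq_zero_iff_of_nonneg ?_).1 hsum
        intro p hp
        linarith [hple p hp]
      intro x hx
      have hgen : ∀ z ∈ vtx '' (↑A : Set (Bool × Finset (Fin n))), pairB y z = 1 := by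
        rintro z ⟨p, hp, rfl⟩
        have := hall p (by exact_mod_cast hp)
        linarith
      exact convexHull_min hgen (pairB_convex_eq y 1) hx
  have hexp : IsExposed ℝ (hansenPolytope Gᶜ) (dualFace Gᶜ (FF G m)) := by
    intro _
    refine ⟨toCLM (qvec x0), ?_⟩
    rw [hchar]
    ext y
    simp only [Set.mem_setOf_eq, toCLM_apply, dot_qvec_pair]
    constructor
    · rintro ⟨hyP, hy1⟩
      refine ⟨hyP, fun z hz => ?_⟩
      rw [hy1]
      exact pairB_le_one hz hx0P
    · rintro ⟨hyP, hymax⟩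
      refine ⟨hyP, ?_⟩
      obtain ⟨y0, hy0⟩ := hwit
      have hy0' : y0 ∈ {y ∈ hansenPolytope Gᶜ | pairB y x0 = 1} := by
        rw [← hchar]; exact hy0
      have h1 := hymax y0 hy0'.1
      rw [hy0'.2] at h1
      have h3 : pairB y x0 ≤ 1 := pairB_le_one hyP hx0P
      linarith
  exact ⟨hexp, (exposed_iff Gᶜ _).1 ⟨hexp, hwit⟩⟩

end DualGood

lemma sgn_not (b : Bool) : sgn (!b) = -(sgn b) := by cases b <;> simp [sgn]

lemma sgn_mul_self (b : Bool) : sgn b * sgn b = 1 := by cases b <;> simp [sgn]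

lemma dot_convex_eq (a : E n) (r : ℝ) : Convex ℝ {x : E n | dot a x = r} := by
  intro u hu v hv s t hs ht hst
  simp only [Set.mem_setOf_eq] at *
  rw [dot_add_right, dot_smul_right, dot_smul_right, hu, hv, ← add_mul, hst, one_mul]

lemma dot_vtx (m : E n) (b : Bool) (I : Finset (Fin n)) :
    dot m (vtx (b, I)) = sgn b * (m 0 + ∑ i ∈ I, m i.succ) := by
  show dot m (sgn b • hansenVert I) = _
  rw [dot_smul_right]
  congr 1
  unfold dot
  rw [Fin.sum_univ_succ, hansenVert_zero, mul_one]
  congr 1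
  have h : ∀ i : Fin n, m i.succ * hansenVert I i.succ
      = if i ∈ I then m i.succ else 0 := by
    intro i; rw [hansenVert_succ]; split <;> simp
  rw [Finset.sum_congr rfl (fun i _ => h i), Finset.sum_ite_mem, Finset.univ_inter]

lemma vtx_mem_FF {G : SimpleGraph (Fin n)} {m : E n} {p} (hp : p ∈ AFin G m) :
    vtx p ∈ FF G m :=
  subset_convexHull ℝ _ ⟨p, by exact_mod_cast hp, rfl⟩

section P1

variable {G : SimpleGraph (Fin n)} {C S : Finset (Fin n)}

lemma P1gen (hdisj : Disjoint C S) (hcover : C ∪ S = Finset.univ)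
    (hC : G.IsClique (↑C : Set (Fin n))) (hS : IsStable G S)
    (m : E n) (σ : Bool)
    (hnot : ¬ ∃ B ⊆ C, FF G m ⊆ hFace G (sgn σ) B) :
    ∃ I, I ⊆ S ∧ IsStable G I ∧ vtx (σ, I) ∈ FF G m := by
  classical
  by_contra hcon
  push_neg at hcon
  apply hnot
  set B := C.filter (fun c => ∃ I : Finset (Fin n), (σ, I) ∈ AFin G m ∧ c ∈ I) with hB
  have hBC : B ⊆ C := Finset.filter_subset _ _
  have hBclique : G.IsClique ↑B := hC.subset (by exact_mod_cast hBC)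
  have hsub_S : ∀ I : Finset (Fin n), I ∩ C = ∅ → I ⊆ S := by
    intro I h x hx
    have hu := Finset.mem_univ x
    rw [← hcover, Finset.mem_union] at hu
    rcases hu with hc | hs
    · exact absurd (Finset.mem_inter.2 ⟨hx, hc⟩) (by rw [h]; exact Finset.notMem_empty x)
    · exact hs
  have claimPos : ∀ I : Finset (Fin n), (σ, I) ∈ AFin G m → (B ∩ I).Nonempty := by
    intro I hI
    have hIstab : IsStable G I := mem_Idx.1 (AFin_subset G m hI)
    have hIC : (I ∩ C).Nonempty := by
      by_contra hempty
      rw [Finset.not_nonempty_iff_eq_empty] at hempty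
      exact hcon I (hsub_S I hempty) hIstab (vtx_mem_FF hI)
    obtain ⟨c, hc⟩ := hIC
    have hcI := (Finset.mem_inter.1 hc).1
    have hcC := (Finset.mem_inter.1 hc).2
    exact ⟨c, Finset.mem_inter.2 ⟨Finset.mem_filter.2 ⟨hcC, I, hI, hcI⟩, hcI⟩⟩
  have claimNeg : ∀ J : Finset (Fin n), (!σ, J) ∈ AFin G m → B ∩ J = ∅ := by
    intro J hJ
    by_contra hne
    rw [← Finset.not_nonempty_iff_eq_empty, not_not] at hne
    obtain ⟨c, hc⟩ := hne
    have hcB := (Finset.mem_inter.1 hc).1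
    have hcJ := (Finset.mem_inter.1 hc).2
    obtain ⟨hcC, I, hIA, hcI⟩ := Finset.mem_filter.1 hcB
    have hIstab : IsStable G I := mem_Idx.1 (AFin_subset G m hIA)
    have hJstab : IsStable G J := mem_Idx.1 (AFin_subset G m hJ)
    -- the C-parts of I and J are both exactly {c}
    have hICcard : (C ∩ I).card ≤ 1 := inter_card_le_one hC hIstab
    have hJCcard : (C ∩ J).card ≤ 1 := inter_card_le_one hC hJstab
    have hIC : I ∩ C = {c} := by
      rw [Finset.eq_singleton_iff_unique_mem]
      refine ⟨Finset.mem_inter.2 ⟨hcI, hcC⟩, ?_⟩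
      intro x hx
      rw [Finset.inter_comm] at hx
      exact Finset.card_le_one.1 hICcard x hx c
        (Finset.mem_inter.2 ⟨hcC, hcI⟩)
    have hJC : J ∩ C = {c} := by
      rw [Finset.eq_singleton_iff_unique_mem]
      refine ⟨Finset.mem_inter.2 ⟨hcJ, hcC⟩, ?_⟩
      intro x hx
      rw [Finset.inter_comm] at hx
      exact Finset.card_le_one.1 hJCcard x hx c
        (Finset.mem_inter.2 ⟨hcC, hcJ⟩)
    -- sums split
    have hIsplit : ∑ i ∈ I, m i.succ = m c.succ + ∑ i ∈ I \ C, m i.succ := by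
      have := Finset.sum_inter_add_sum_sdiff I C (fun i => m i.succ)
      rw [hIC, Finset.sum_singleton] at this
      linarith
    have hJsplit : ∑ i ∈ J, m i.succ = m c.succ + ∑ i ∈ J \ C, m i.succ := by
      have := Finset.sum_inter_add_sum_sdiff J C (fun i => m i.succ)
      rw [hJC, Finset.sum_singleton] at this
      linarith
    -- values
    have hIval : dot m (vtx (σ, I)) = MaxV G m := (mem_AFin.1 hIA).2
    have hJval : dot m (vtx (!σ, J)) = MaxV G m := (mem_AFin.1 hJ).2
    have hIdiff_mem : ((σ, I \ C) : Bool × Finset (Fin n)) ∈ Idx G :=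
      mem_Idx.2 (stable_subset hIstab Finset.sdiff_subset)
    have hJdiff_mem : ((!σ, J \ C) : Bool × Finset (Fin n)) ∈ Idx G :=
      mem_Idx.2 (stable_subset hJstab Finset.sdiff_subset)
    have hIle := le_MaxV_of_idx G m hIdiff_mem
    have hJle := le_MaxV_of_idx G m hJdiff_mem
    rw [dot_vtx] at hIval hJval hIle hJle
    rw [sgn_not] at hJval hJle
    rw [hIsplit] at hIval
    rw [hJsplit] at hJval
    -- deduce sgn σ * m c.succ = 0
    have h1 : sgn σ * m c.succ ≥ 0 := by nlinarith [hIval, hIle]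
    have h2 : sgn σ * m c.succ ≤ 0 := by nlinarith [hJval, hJle]
    have h3 : sgn σ * m c.succ = 0 := le_antisymm h2 h1
    -- so the S-part of I is also a maximizer
    have hmax : dot m (vtx (σ, I \ C)) = MaxV G m := by
      rw [dot_vtx]
      rw [← hIval]
      ring_nf
      ring_nf at h3
      nlinarith [h3]
    have hAFin : ((σ, I \ C) : Bool × Finset (Fin n)) ∈ AFin G m :=
      mem_AFin.2 ⟨hIdiff_mem, hmax⟩
    have hsubS : I \ C ⊆ S := by
      intro x hx
      have hu := Finset.mem_univ x
      rw [← hcover, Finset.mem_union] at hu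
      rcases hu with hc' | hs
      · exact absurd hc' (Finset.mem_sdiff.1 hx).2
      · exact hs
    exact hcon (I \ C) hsubS (stable_subset hIstab Finset.sdiff_subset) (vtx_mem_FF hAFin)
  refine ⟨B, hBC, ?_⟩
  rw [hFace_eq]
  intro x hx
  refine ⟨FF_subset G m hx, ?_⟩
  have hgen : ∀ z ∈ vtx '' (↑(AFin G m) : Set (Bool × Finset (Fin n))),
      dot (gvec (sgn σ) B) z = 1 := by
    rintro z ⟨p, hp, rfl⟩
    obtain ⟨b, I⟩ := p
    have hpA : ((b, I) : Bool × Finset (Fin n)) ∈ AFin G m := by exact_mod_cast hp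
    have hIstab : IsStable G I := mem_Idx.1 (AFin_subset G m hpA)
    rw [dot_gvec_vtx]
    by_cases hbs : b = σ
    · subst hbs
      have hone : (B ∩ I).card = 1 :=
        le_antisymm (inter_card_le_one hBclique hIstab)
          (Finset.card_pos.2 (claimPos I hpA))
      rw [hone]
      push_cast
      rw [show (2 * (1:ℝ) - 1) = 1 by norm_num, mul_one, sgn_mul_self]
    · have hbs' : b = !σ := by cases σ <;> cases b <;> simp_all
      subst hbs'
      have hzero : B ∩ I = ∅ := claimNeg I hpA
      rw [hzero]
      simp only [Finset.card_empty, Nat.cast_zero, mul_zero, zero_sub]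
      rw [sgn_not]
      have := sgn_mul_self σ
      nlinarith [this]
  exact convexHull_min hgen (dot_convex_eq _ 1) hx

end P1

lemma compl_clique {G : SimpleGraph (Fin n)} {S : Finset (Fin n)} (hS : IsStable G S) :
    Gᶜ.IsClique (↑S : Set (Fin n)) := by
  intro a ha b hb hne
  exact (G.compl_adj a b).2 ⟨hne, hS ha hb⟩

lemma compl_stable {G : SimpleGraph (Fin n)} {C : Finset (Fin n)}
    (hC : G.IsClique (↑C : Set (Fin n))) : IsStable Gᶜ C := by
  intro a ha b hb hadj
  rw [G.compl_adj] at hadj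
  exact hadj.2 (hC ha hb hadj.1)

lemma FF_zero (G : SimpleGraph (Fin n)) : FF G 0 = hansenPolytope G := by
  have hdz : ∀ x : E n, dot (0 : E n) x = 0 := by
    intro x; unfold dot; simp
  have hMV : MaxV G (0 : E n) = 0 := by
    apply le_antisymm
    · exact Finset.sup'_le _ _ (fun p _ => le_of_eq (hdz _))
    · obtain ⟨p, hp⟩ := Idx_nonempty G
      calc (0:ℝ) = dot (0 : E n) (vtx p) := (hdz _).symm
        _ ≤ MaxV G 0 := le_MaxV_of_idx G 0 hp
  have hAll : AFin G (0 : E n) = Idx G := by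
    apply Finset.Subset.antisymm (AFin_subset G 0)
    intro p hp
    exact mem_AFin.2 ⟨hp, by rw [hdz, hMV]⟩
  rw [FF, hAll, ← hansen_eq]

lemma vtx_empty_val (e : ℝ) (B : Finset (Fin n)) (σ : Bool) :
    dot (gvec e B) (vtx (σ, ∅)) = -(e * sgn σ) := by
  rw [dot_gvec_vtx]
  have : B ∩ (∅ : Finset (Fin n)) = ∅ := Finset.inter_empty B
  rw [this]
  simp

section Assemble

variable {G : SimpleGraph (Fin n)} {C S : Finset (Fin n)}

/-- The whole polytope `H(Gᶜ)` is a primitive face. -/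
lemma whole_primitive (hdisj : Disjoint C S) :
    IsExposed ℝ (hansenPolytope Gᶜ) (hansenPolytope Gᶜ) ∧
      (hansenPolytope Gᶜ).Nonempty ∧
      (∀ ε : ℝ, (ε = 1 ∨ ε = -1) → ∀ B ⊆ S, ¬ hansenPolytope Gᶜ ⊆ hFace Gᶜ ε B) := by
  have hexp := (exposed_iff Gᶜ (hansenPolytope Gᶜ)).2 ⟨0, (FF_zero Gᶜ).symm⟩
  refine ⟨hexp.1, hexp.2, ?_⟩
  intro ε hε B hBS hsub
  rcases hε with rfl | rfl
  · have hmem : ((true, ∅) : Bool × Finset (Fin n)) ∈ Idx Gᶜ := mem_Idx.2 (stable_empty _)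
    have h1 := hsub (vtx_mem Gᶜ hmem)
    rw [hFace_eq] at h1
    have h2 := h1.2
    rw [vtx_empty_val] at h2
    rw [show sgn true = (1:ℝ) from rfl] at h2
    norm_num at h2
  · have hmem : ((false, ∅) : Bool × Finset (Fin n)) ∈ Idx Gᶜ := mem_Idx.2 (stable_empty _)
    have h1 := hsub (vtx_mem Gᶜ hmem)
    rw [hFace_eq] at h1
    have h2 := h1.2
    rw [vtx_empty_val] at h2
    rw [show sgn false = (-1:ℝ) from rfl] at h2
    norm_num at h2

lemma phi_maps (hdisj : Disjoint C S) (hcover : C ∪ S = Finset.univ)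
    (hC : G.IsClique (↑C : Set (Fin n))) (hS : IsStable G S)
    {F : Set (E n)}
    (hT : IsExposed ℝ (hansenPolytope G) F ∧ F.Nonempty)
    (hPos : ∃ B ⊆ C, F ⊆ hFace G 1 B)
    (hNeg : ∃ B' ⊆ C, F ⊆ hFace G (-1) B') :
    (IsExposed ℝ (hansenPolytope Gᶜ) (dualFace Gᶜ F) ∧ (dualFace Gᶜ F).Nonempty ∧
      (∀ ε : ℝ, (ε = 1 ∨ ε = -1) → ∀ B ⊆ S, ¬ dualFace Gᶜ F ⊆ hFace Gᶜ ε B)) ∧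
      dualFace Gᶜ F ≠ hansenPolytope Gᶜ ∧
      dualFace G (dualFace Gᶜ F) = F := by
  classical
  obtain ⟨m, rfl⟩ := (exposed_iff G F).1 hT
  obtain ⟨Bp, hBpC, hBp⟩ := hPos
  obtain ⟨Bm, hBmC, hBm⟩ := hNeg
  -- the two witness vertices of the dual face
  have hpmem : ((true, Bp) : Bool × Finset (Fin n)) ∈ Idx Gᶜ :=
    mem_Idx.2 ((stable_compl_iff G Bp).2 (hC.subset (by exact_mod_cast hBpC)))
  have hmmem : ((false, Bm) : Bool × Finset (Fin n)) ∈ Idx Gᶜ :=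
    mem_Idx.2 ((stable_compl_iff G Bm).2 (hC.subset (by exact_mod_cast hBmC)))
  have hyp : vtx (true, Bp) ∈ dualFace Gᶜ (FF G m) := by
    refine ⟨vtx_mem Gᶜ hpmem, ?_⟩
    intro x hx
    have hmemf := hBp hx
    rw [hFace_eq] at hmemf
    have hval := hmemf.2
    rw [dot_gvec_val, one_mul] at hval
    rw [pairB_vtx_left, show sgn true = (1:ℝ) from rfl, one_mul]
    exact hval
  have hym : vtx (false, Bm) ∈ dualFace Gᶜ (FF G m) := by
    refine ⟨vtx_mem Gᶜ hmmem, ?_⟩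
    intro x hx
    have hmemf := hBm hx
    rw [hFace_eq] at hmemf
    have hval := hmemf.2
    rw [dot_gvec_val] at hval
    rw [pairB_vtx_left, show sgn false = (-1:ℝ) from rfl]
    linarith
  have hwit : (dualFace Gᶜ (FF G m)).Nonempty := ⟨_, hyp⟩
  obtain ⟨hexp, _⟩ := dualFace_good m hwit
  have hinterSC : ∀ B B' : Finset (Fin n), B ⊆ S → B' ⊆ C → B ∩ B' = ∅ := by
    intro B B' hBS hB'C
    rw [Finset.eq_empty_iff_forall_notMem]
    intro x hx
    have h1 := hBS (Finset.mem_inter.1 hx).1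
    have h2 := hB'C (Finset.mem_inter.1 hx).2
    exact Finset.disjoint_left.1 hdisj h2 h1
  refine ⟨⟨hexp, hwit, ?_⟩, ?_, ?_⟩
  · -- primitivity
    intro ε hε B hBS hsub
    rcases hε with rfl | rfl
    · have h1 := hsub hyp
      rw [hFace_eq] at h1
      have h2 := h1.2
      rw [dot_gvec_vtx, hinterSC B Bp hBS hBpC] at h2
      rw [show sgn true = (1:ℝ) from rfl] at h2
      norm_num at h2
    · have h1 := hsub hym
      rw [hFace_eq] at h1
      have h2 := h1.2
      rw [dot_gvec_vtx, hinterSC B Bm hBS hBmC] at h2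
      rw [show sgn false = (-1:ℝ) from rfl] at h2
      norm_num at h2
  · -- not the whole polytope
    intro heq
    obtain ⟨x, hxF⟩ := hT.2
    have hm1 : vtx (true, (∅ : Finset (Fin n))) ∈ dualFace Gᶜ (FF G m) := by
      rw [heq]; exact vtx_mem Gᶜ (mem_Idx.2 (stable_empty _))
    have hm2 : vtx (false, (∅ : Finset (Fin n))) ∈ dualFace Gᶜ (FF G m) := by
      rw [heq]; exact vtx_mem Gᶜ (mem_Idx.2 (stable_empty _))
    have h1 := hm1.2 x hxF
    have h2 := hm2.2 x hxF
    rw [pairB_vtx_left, show sgn true = (1:ℝ) from rfl, one_mul, val_eq] at h1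
    rw [pairB_vtx_left, show sgn false = (-1:ℝ) from rfl, val_eq] at h2
    simp only [Finset.sum_empty, mul_zero, add_zero] at h1 h2
    linarith
  · -- biduality
    have hFneq : FF G m ≠ hansenPolytope G := by
      intro heq
      have hmem : vtx (true, (∅ : Finset (Fin n))) ∈ FF G m := by
        rw [heq]; exact vtx_mem G (mem_Idx.2 (stable_empty _))
      have h1 := hBp hmem
      rw [hFace_eq] at h1
      have h2 := h1.2
      rw [vtx_empty_val, show sgn true = (1:ℝ) from rfl] at h2
      norm_num at h2
    obtain ⟨m₁, hm₁, hM₁⟩ := FF_neq_P_normalize m hFneq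
    have hfd := (face_decomp hdisj hcover hC hS hM₁).2
    rw [hm₁] at hfd
    apply Set.Subset.antisymm
    · rintro x ⟨hxP, hxall⟩
      apply hfd x hxP
      intro q hq hprem
      have hqd : vtx q ∈ dualFace Gᶜ (FF G m) := ⟨vtx_mem Gᶜ hq, hprem⟩
      have := hxall _ hqd
      rwa [pairB_comm] at this
    · intro x hxF
      exact ⟨FF_subset G m hxF, fun y hy => by rw [pairB_comm]; exact hy.2 x hxF⟩

lemma psi_maps (hdisj : Disjoint C S) (hcover : C ∪ S = Finset.univ)
    (hC : G.IsClique (↑C : Set (Fin n))) (hS : IsStable G S)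
    {F' : Set (E n)}
    (hT : IsExposed ℝ (hansenPolytope Gᶜ) F' ∧ F'.Nonempty)
    (hprim : ∀ ε : ℝ, (ε = 1 ∨ ε = -1) → ∀ B ⊆ S, ¬ F' ⊆ hFace Gᶜ ε B)
    (hne : F' ≠ hansenPolytope Gᶜ) :
    ((IsExposed ℝ (hansenPolytope G) (dualFace G F') ∧ (dualFace G F').Nonempty) ∧
      (∃ B ⊆ C, dualFace G F' ⊆ hFace G 1 B) ∧
      (∃ B' ⊆ C, dualFace G F' ⊆ hFace G (-1) B')) ∧
      dualFace Gᶜ (dualFace G F') = F' := by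
  classical
  obtain ⟨m', rfl⟩ := (exposed_iff Gᶜ F').1 hT
  have h1' : Disjoint S C := hdisj.symm
  have h2' : S ∪ C = Finset.univ := by rw [Finset.union_comm]; exact hcover
  have h3' : Gᶜ.IsClique (↑S : Set (Fin n)) := compl_clique hS
  have h4' : IsStable Gᶜ C := compl_stable hC
  -- vertices of C-type of both signs inside F'
  have hnot1 : ¬ ∃ B ⊆ S, FF Gᶜ m' ⊆ hFace Gᶜ (sgn true) B := by
    rintro ⟨B, hBS, hsub⟩
    exact hprim 1 (Or.inl rfl) B hBS hsub
  have hnot2 : ¬ ∃ B ⊆ S, FF Gᶜ m' ⊆ hFace Gᶜ (sgn false) B := by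
    rintro ⟨B, hBS, hsub⟩
    exact hprim (-1) (Or.inr rfl) B hBS hsub
  obtain ⟨Kp, hKpC, _, hKpmem⟩ := P1gen h1' h2' h3' h4' m' true hnot1
  obtain ⟨Km, hKmC, _, hKmmem⟩ := P1gen h1' h2' h3' h4' m' false hnot2
  -- normalize and decompose
  obtain ⟨m₁, hm₁, hM₁⟩ := FF_neq_P_normalize m' hne
  have hfd := face_decomp h1' h2' h3' h4' hM₁
  rw [compl_compl] at hfd
  obtain ⟨⟨q0, hq0, hq0all⟩, hclos⟩ := hfd
  rw [hm₁] at hq0all hclos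
  have hwit : (dualFace G (FF Gᶜ m')).Nonempty := ⟨vtx q0, vtx_mem G hq0, hq0all⟩
  have hgood := dualFace_good (G := Gᶜ) m' (by rw [compl_compl]; exact hwit)
  rw [compl_compl] at hgood
  refine ⟨⟨⟨hgood.1, hwit⟩, ?_, ?_⟩, ?_⟩
  · -- positive side
    refine ⟨Kp, hKpC, ?_⟩
    intro y hy
    rw [hFace_eq]
    refine ⟨hy.1, ?_⟩
    have := hy.2 _ hKpmem
    rw [pairB_comm, pairB_vtx_left, show sgn true = (1:ℝ) from rfl, one_mul] at this
    rw [dot_gvec_val, one_mul]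
    exact this
  · -- negative side
    refine ⟨Km, hKmC, ?_⟩
    intro y hy
    rw [hFace_eq]
    refine ⟨hy.1, ?_⟩
    have := hy.2 _ hKmmem
    rw [pairB_comm, pairB_vtx_left, show sgn false = (-1:ℝ) from rfl] at this
    rw [dot_gvec_val]
    linarith
  · -- biduality
    apply Set.Subset.antisymm
    · rintro x ⟨hxP, hxall⟩
      apply hclos x hxP
      intro q hq hprem
      have hqd : vtx q ∈ dualFace G (FF Gᶜ m') := ⟨vtx_mem G hq, hprem⟩
      have := hxall _ hqd
      rwa [pairB_comm] at this
    · intro x hxF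
      exact ⟨FF_subset Gᶜ m' hxF, fun y hy => by rw [pairB_comm]; exact hy.2 x hxF⟩

end Assemble

end Hansen

open Hansen in
/-- For a split graph `G = C ∪ S` on `d − 1` vertices,
`s(H(G)) = f_p(G) + f_+(G) + f_-(G) + f_p(Ḡ) − 1`, where the primitive faces of
`H(Ḡ) = H(Gᶜ)` are taken with respect to its type-(1)-facets `[ε, B]`, `B ⊆ S`;
equivalently, the number of nonempty small faces of `H(G)` equals `f_p(Ḡ) − 1`. -/
theorem hansen_split_face_partition {n : ℕ} (G : SimpleGraph (Fin n))
    (C S : Finset (Fin n)) (hdisj : Disjoint C S) (hcover : C ∪ S = Finset.univ)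
    (hC : G.IsClique (↑C : Set (Fin n))) (hS : IsStable G S) :
    numFaces (hansenPolytope G) =
        primCount G C + signedCount G C 1 + signedCount G C (-1) + primCount Gᶜ S - 1 ∧
      smallCount G C = primCount Gᶜ S - 1 := by
  classical
  set X : Set (Set (E n)) := {F | IsExposed ℝ (hansenPolytope G) F ∧ F.Nonempty ∧
    (∃ B ⊆ C, F ⊆ hFace G 1 B) ∧ (∃ B' ⊆ C, F ⊆ hFace G (-1) B')} with hXdef
  set Y : Set (Set (E n)) := {F | IsExposed ℝ (hansenPolytope Gᶜ) F ∧ F.Nonempty ∧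
    (∀ ε : ℝ, (ε = 1 ∨ ε = -1) → ∀ B ⊆ S, ¬ F ⊆ hFace Gᶜ ε B)} with hYdef
  have hbij : Set.BijOn (dualFace Gᶜ) X (Y \ {hansenPolytope Gᶜ}) := by
    refine ⟨?_, ?_, ?_⟩
    · rintro F ⟨hE, hN, hP, hNg⟩
      obtain ⟨⟨e1, e2, e3⟩, e4, _⟩ := phi_maps hdisj hcover hC hS ⟨hE, hN⟩ hP hNg
      exact ⟨⟨e1, e2, e3⟩, by simpa using e4⟩
    · rintro F1 hF1 F2 hF2 heq
      obtain ⟨_, _, e5₁⟩ :=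
        phi_maps hdisj hcover hC hS ⟨hF1.1, hF1.2.1⟩ hF1.2.2.1 hF1.2.2.2
      obtain ⟨_, _, e5₂⟩ :=
        phi_maps hdisj hcover hC hS ⟨hF2.1, hF2.2.1⟩ hF2.2.2.1 hF2.2.2.2
      rw [← e5₁, heq, e5₂]
    · rintro F' ⟨⟨hE', hN', hPr⟩, hne⟩
      simp only [Set.mem_singleton_iff] at hne
      obtain ⟨⟨⟨e1, e2⟩, e3, e4⟩, e5⟩ := psi_maps hdisj hcover hC hS ⟨hE', hN'⟩ hPr hne
      exact ⟨dualFace G F', ⟨e1, e2, e3, e4⟩, e5⟩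
  have hYfin : Y.Finite := (faces_finite Gᶜ).subset (fun F hF => ⟨hF.1, hF.2.1⟩)
  have hPY : hansenPolytope Gᶜ ∈ Y := by
    obtain ⟨a, b, c'⟩ := whole_primitive (G := G) hdisj
    exact ⟨a, b, c'⟩
  have hXcard : X.ncard = (Y \ {hansenPolytope Gᶜ}).ncard := by
    rw [← hbij.image_eq]
    exact (Set.ncard_image_of_injOn hbij.injOn).symm
  have hYcard : (Y \ {hansenPolytope Gᶜ}).ncard + 1 = Y.ncard :=
    Set.ncard_diff_singleton_add_one hPY hYfin
  have hsmall : smallCount G C = X.ncard := by rw [hXdef]; rfl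
  have hprimY : primCount Gᶜ S = Y.ncard := by rw [hYdef]; rfl
  -- partition of all faces
  set T : Set (Set (E n)) := {F | IsExposed ℝ (hansenPolytope G) F ∧ F.Nonempty} with hTdef
  have hTfin : T.Finite := faces_finite G
  set A0 : Set (Set (E n)) := {F | IsExposed ℝ (hansenPolytope G) F ∧ F.Nonempty ∧
    (∀ ε : ℝ, (ε = 1 ∨ ε = -1) → ∀ B ⊆ C, ¬ F ⊆ hFace G ε B)} with hA0def
  set A1 : Set (Set (E n)) := {F | IsExposed ℝ (hansenPolytope G) F ∧ F.Nonempty ∧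
    (∃ B ⊆ C, F ⊆ hFace G 1 B) ∧ (∀ B' ⊆ C, ¬ F ⊆ hFace G (-1) B')} with hA1def
  set A2 : Set (Set (E n)) := {F | IsExposed ℝ (hansenPolytope G) F ∧ F.Nonempty ∧
    (∃ B ⊆ C, F ⊆ hFace G (-1) B) ∧ (∀ B' ⊆ C, ¬ F ⊆ hFace G (-(-1)) B')} with hA2def
  have hneg1 : ((-(-1) : ℝ)) = 1 := by norm_num
  have hTeq : T = (A0 ∪ A1) ∪ (A2 ∪ X) := by
    ext F
    simp only [hTdef, hA0def, hA1def, hA2def, hXdef, Set.mem_union, Set.mem_setOf_eq]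
    constructor
    · rintro ⟨hE, hN⟩
      by_cases hp : ∃ B ⊆ C, F ⊆ hFace G 1 B
      · by_cases hq : ∃ B ⊆ C, F ⊆ hFace G (-1) B
        · exact Or.inr (Or.inr ⟨hE, hN, hp, hq⟩)
        · push_neg at hq
          exact Or.inl (Or.inr ⟨hE, hN, hp, hq⟩)
      · by_cases hq : ∃ B ⊆ C, F ⊆ hFace G (-1) B
        · push_neg at hp
          refine Or.inr (Or.inl ⟨hE, hN, hq, ?_⟩)
          intro B hB
          rw [hneg1]
          exact hp B hB
        · push_neg at hp hq
          refine Or.inl (Or.inl ⟨hE, hN, ?_⟩)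
          intro ε hε B hB
          rcases hε with rfl | rfl
          · exact hp B hB
          · exact hq B hB
    · rintro ((⟨hE, hN, _⟩ | ⟨hE, hN, _⟩) | (⟨hE, hN, _⟩ | ⟨hE, hN, _⟩)) <;> exact ⟨hE, hN⟩
  have hsub0 : A0 ⊆ T := fun F hF => ⟨hF.1, hF.2.1⟩
  have hsub1 : A1 ⊆ T := fun F hF => ⟨hF.1, hF.2.1⟩
  have hsub2 : A2 ⊆ T := fun F hF => ⟨hF.1, hF.2.1⟩
  have hsubX : X ⊆ T := fun F hF => ⟨hF.1, hF.2.1⟩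
  have hd1 : Disjoint A0 A1 := by
    rw [Set.disjoint_left]
    rintro F ⟨_, _, h0⟩ ⟨_, _, ⟨B, hB, hsub⟩, _⟩
    exact h0 1 (Or.inl rfl) B hB hsub
  have hd2 : Disjoint A2 X := by
    rw [Set.disjoint_left]
    rintro F ⟨_, _, _, h2⟩ ⟨_, _, ⟨B, hB, hsub⟩, _⟩
    have := h2 B hB
    rw [hneg1] at this
    exact this hsub
  have hd3 : Disjoint (A0 ∪ A1) (A2 ∪ X) := by
    rw [Set.disjoint_left]
    rintro F hF01 hF2X
    have hFneg : ∃ B ⊆ C, F ⊆ hFace G (-1) B := by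
      rcases hF2X with ⟨_, _, h, _⟩ | ⟨_, _, _, h⟩
      · exact h
      · exact h
    obtain ⟨B, hB, hsub⟩ := hFneg
    rcases hF01 with ⟨_, _, h0⟩ | ⟨_, _, _, h1⟩
    · exact h0 (-1) (Or.inr rfl) B hB hsub
    · exact h1 B hB hsub
  have hcount : T.ncard = (A0.ncard + A1.ncard) + (A2.ncard + X.ncard) := by
    rw [hTeq]
    rw [Set.ncard_union_eq hd3 ((hTfin.subset hsub0).union (hTfin.subset hsub1))
      ((hTfin.subset hsub2).union (hTfin.subset hsubX))]
    rw [Set.ncard_union_eq hd1 (hTfin.subset hsub0) (hTfin.subset hsub1)]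
    rw [Set.ncard_union_eq hd2 (hTfin.subset hsub2) (hTfin.subset hsubX)]
  have hnum : numFaces (hansenPolytope G) = T.ncard := by rw [hTdef]; rfl
  have hA0c : primCount G C = A0.ncard := by rw [hA0def]; rfl
  have hA1c : signedCount G C 1 = A1.ncard := by rw [hA1def]; rfl
  have hA2c : signedCount G C (-1) = A2.ncard := by rw [hA2def]; rfl
  constructor
  · omega
  · omega
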